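/- arXiv:1105.3148 — 4 statements merged into one kernel-verified Lean document; each statement's English description precedes it below -/
import Mathlib

section
/- Let P be a finite Eulerian poset of rank d ≥ 2 with minimum 0̂ and maximum 1̂, and let Q be the subposet obtained from P by removing all atoms of P. Then μ_Q(0̂, 1̂) = (-1)^{d-1} (f₀(P) - 1), where f₀(P) is the number of atoms of P. -/
open Finset

/-- The Möbius function of a finite partial order, valued in `ℤ`. -/
noncomputable def pmu (α : Type*) [PartialOrder α] [Finite α] : α → α → ℤ :=
  letI := Fintype.ofFinite α
  letI := Classical.decEq α
  letI : @DecidableRel α α (· ≤ ·) := Classical.decRel _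
  letI : @DecidableRel α α (· < ·) := Classical.decRel _
  letI := Fintype.toLocallyFiniteOrder (α := α)
  fun x y => IncidenceAlgebra.mu ℤ x y

variable {α : Type*} [PartialOrder α]

/-- `c` is a maximal chain of the subposet `S`. -/
def IsMaxChainIn (S : Set α) (c : Finset α) : Prop :=
  ↑c ⊆ S ∧ IsChain (· ≤ ·) (c : Set α) ∧
    ∀ c' : Finset α, ↑c' ⊆ S → IsChain (· ≤ ·) (c' : Set α) → c ⊆ c' → c = c'

/-- The interval `[x,y]` is graded of rank `r`: every maximal chain of it has `r+1` elements. -/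
def IntervalGraded (x y : α) (r : ℕ) : Prop :=
  ∀ c : Finset α, IsMaxChainIn (Set.Icc x y) c → c.card = r + 1

/-- The subposet `S` is graded of rank `d`: every maximal chain of `S` has `d+1` elements. -/
def GradedRank (S : Set α) (d : ℕ) : Prop :=
  ∀ c : Finset α, IsMaxChainIn S c → c.card = d + 1

/-- A finite poset is lower Eulerian with rank function `ρ` on intervals: every interval
`[x,y]` is graded of rank `ρ x y` with `μ(x,y) = (-1)^{ρ x y}` (a minimum element is
required separately, via `OrderBot`). -/
def LowerEulerianWith (α : Type*) [PartialOrder α] [Finite α] (ρ : α → α → ℕ) : Prop :=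
  ∀ x y : α, x ≤ y → IntervalGraded x y (ρ x y) ∧ pmu α x y = (-1) ^ ρ x y

instance (α : Type*) [Fintype α] : Fintype (WithTop α) := instFintypeOption
instance (α : Type*) [Fintype α] : Fintype (WithBot α) := instFintypeOption

instance (α : Type*) [Finite α] : Finite (WithTop α) :=
  letI := Fintype.ofFinite α; @Finite.of_fintype (WithTop α) (instFintypeOption (α := α))
instance (α : Type*) [Finite α] : Finite (WithBot α) :=
  letI := Fintype.ofFinite α; @Finite.of_fintype (WithBot α) (instFintypeOption (α := α))

set_option linter.unusedSectionVars false

lemma pmu_self {β : Type*} [PartialOrder β] [Finite β] (x : β) : pmu β x x = 1 := by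
  letI := Fintype.ofFinite β
  letI := Classical.decEq β
  letI : @DecidableRel β β (· ≤ ·) := Classical.decRel _
  letI : @DecidableRel β β (· < ·) := Classical.decRel _
  letI := Fintype.toLocallyFiniteOrder (α := β)
  exact IncidenceAlgebra.mu_self x

lemma pmu_sum_Icc {β : Type*} [PartialOrder β] [Finite β] (x y : β) :
    letI := Fintype.ofFinite β
    letI := Classical.decEq β
    letI : @DecidableRel β β (· ≤ ·) := Classical.decRel _
    letI : @DecidableRel β β (· < ·) := Classical.decRel _
    letI := Fintype.toLocallyFiniteOrder (α := β)
    ∑ z ∈ Finset.Icc x y, pmu β x z = if x = y then 1 else 0 := by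
  letI := Fintype.ofFinite β
  letI := Classical.decEq β
  letI : @DecidableRel β β (· ≤ ·) := Classical.decRel _
  letI : @DecidableRel β β (· < ·) := Classical.decRel _
  letI := Fintype.toLocallyFiniteOrder (α := β)
  exact IncidenceAlgebra.sum_Icc_mu_right x y

open scoped Classical in
lemma pmu_sum_filter {β : Type*} [PartialOrder β] [Fintype β] (x y : β) (hxy : x ≠ y) :
    ∑ z ∈ univ.filter (fun z => x ≤ z ∧ z ≤ y), pmu β x z = 0 := by
  have key := pmu_sum_Icc (β := β) x y
  rw [if_neg hxy] at key
  refine Eq.trans ?_ key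
  exact Finset.sum_congr (Finset.ext fun z => by simp [Finset.mem_Icc]) (fun _ _ => rfl)

-- extension lemma
lemma exists_maxChainIn [Fintype α] (S : Set α) (c : Finset α) (hcS : ↑c ⊆ S)
    (hc : IsChain (· ≤ ·) (c : Set α)) : ∃ m, IsMaxChainIn S m ∧ c ⊆ m := by
  classical
  have hne : (univ.filter (fun m : Finset α =>
      ↑m ⊆ S ∧ IsChain (· ≤ ·) (m : Set α) ∧ c ⊆ m)).Nonempty :=
    ⟨c, by simp [hcS, hc]⟩
  obtain ⟨m, hmmem, hmax⟩ := Finset.exists_max_image _ (fun m : Finset α => m.card) hne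
  simp only [mem_filter, mem_univ, true_and] at hmmem
  refine ⟨m, ⟨hmmem.1, hmmem.2.1, ?_⟩, hmmem.2.2⟩
  intro c' hc'S hc'chain hsub
  refine Finset.eq_of_subset_of_card_le hsub (hmax c' ?_)
  simp only [mem_filter, mem_univ, true_and]
  exact ⟨hc'S, hc'chain, hmmem.2.2.trans hsub⟩

lemma mem_of_maxChainIn {S : Set α} {c : Finset α} (hc : IsMaxChainIn S c) {a : α}
    (haS : a ∈ S) (hcomp : ∀ b ∈ c, a ≤ b ∨ b ≤ a) : a ∈ c := by
  classical
  have h := hc.2.2 (insert a c) ?_ ?_ (Finset.subset_insert _ _)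
  · rw [h]; exact Finset.mem_insert_self _ _
  · rw [Finset.coe_insert]
    exact Set.insert_subset haS hc.1
  · rw [Finset.coe_insert]
    exact hc.2.1.insert (fun b hb _ => hcomp b hb)

section Rho
variable [Fintype α] {ρ : α → α → ℕ}
  (hgrad : ∀ x y : α, x ≤ y → IntervalGraded x y (ρ x y))
include hgrad

-- any chain in Icc x y has card ≤ ρ x y + 1
lemma chain_card_le {x y : α} (hxy : x ≤ y) (c : Finset α) (hcS : ↑c ⊆ Set.Icc x y)
    (hc : IsChain (· ≤ ·) (c : Set α)) : c.card ≤ ρ x y + 1 := by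
  obtain ⟨m, hm, hsub⟩ := exists_maxChainIn _ c hcS hc
  have h1 := hgrad x y hxy m hm
  have h2 := Finset.card_le_card hsub
  omega
lemma rho_self (x : α) : ρ x x = 0 := by
  have h := hgrad x x le_rfl {x} ?_
  · simp only [Finset.card_singleton] at h
    omega
  refine ⟨by simp, Set.Subsingleton.isChain (by simp), ?_⟩
  intro c' hc'S _ hsub
  refine Finset.Subset.antisymm hsub ?_
  intro b hb
  have := hc'S hb
  simp only [Set.Icc_self, Set.mem_singleton_iff] at this
  simp [this]

lemma rho_pos {x y : α} (hxy : x < y) : 1 ≤ ρ x y := by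
  classical
  have h2 : ({x, y} : Finset α).card ≤ ρ x y + 1 := by
    refine chain_card_le hgrad hxy.le _ ?_ ?_
    · intro b hb
      simp only [coe_insert, coe_singleton, Set.mem_insert_iff, Set.mem_singleton_iff] at hb
      rcases hb with rfl | rfl
      · exact ⟨le_rfl, hxy.le⟩
      · exact ⟨hxy.le, le_rfl⟩
    · simp only [coe_insert, coe_singleton]
      exact IsChain.pair hxy.le
  rw [Finset.card_insert_of_notMem (by simp [hxy.ne]), Finset.card_singleton] at h2
  omega

lemma rho_cov {x y : α} (h : x ⋖ y) : ρ x y = 1 := by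
  classical
  have hIcc : Set.Icc x y = {x, y} := by
    ext z
    constructor
    · rintro ⟨h1, h2⟩
      rcases eq_or_lt_of_le h1 with rfl | h1'
      · exact Or.inl rfl
      rcases eq_or_lt_of_le h2 with rfl | h2'
      · exact Or.inr rfl
      exact absurd h2' (h.2 h1')
    · rintro (rfl | rfl)
      · exact ⟨le_rfl, h.le⟩
      · exact ⟨h.le, le_rfl⟩
  have hm : IsMaxChainIn (Set.Icc x y) ({x, y} : Finset α) := by
    refine ⟨?_, ?_, ?_⟩
    · intro b hb
      simp only [coe_insert, coe_singleton, Set.mem_insert_iff, Set.mem_singleton_iff] at hb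
      rw [hIcc]; exact hb
    · simp only [coe_insert, coe_singleton]
      exact IsChain.pair h.le
    · intro c' hc'S _ hsub
      refine Finset.Subset.antisymm hsub ?_
      intro b hb
      have := hc'S hb
      rw [hIcc] at this
      simpa using this
  have := hgrad x y h.le _ hm
  rw [Finset.card_insert_of_notMem (by simp [h.ne]), Finset.card_singleton] at this
  omega

lemma cov_of_rho_one {x y : α} (hxy : x ≤ y) (h : ρ x y = 1) : x ⋖ y := by
  classical
  have hne : x ≠ y := by
    rintro rfl
    rw [rho_self hgrad] at h
    omega
  refine ⟨lt_of_le_of_ne hxy hne, ?_⟩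
  intro w hw1 hw2
  have h3 : ({x, w, y} : Finset α).card ≤ ρ x y + 1 := by
    refine chain_card_le hgrad hxy _ ?_ ?_
    · intro b hb
      simp only [coe_insert, coe_singleton, Set.mem_insert_iff, Set.mem_singleton_iff] at hb
      rcases hb with rfl | rfl | rfl
      · exact ⟨le_rfl, hxy⟩
      · exact ⟨hw1.le, hw2.le⟩
      · exact ⟨hxy, le_rfl⟩
    · simp only [coe_insert, coe_singleton]
      refine (IsChain.pair hw2.le).insert ?_
      rintro b hb -
      rcases hb with rfl | rfl
      · exact Or.inl hw1.le
      · exact Or.inl hxy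
  have hcard : ({x, w, y} : Finset α).card = 3 := by
    rw [Finset.card_insert_of_notMem (by simp [hw1.ne, hne]),
      Finset.card_insert_of_notMem (by simp [hw2.ne]), Finset.card_singleton]
  omega

lemma rho_add {x y z : α} (hxy : x ≤ y) (hyz : y ≤ z) : ρ x y + ρ y z = ρ x z := by
  classical
  obtain ⟨c1, hc1, -⟩ := exists_maxChainIn (Set.Icc x y) {x}
    (by simp [Set.left_mem_Icc, hxy]) (Set.Subsingleton.isChain (by simp))
  obtain ⟨c2, hc2, -⟩ := exists_maxChainIn (Set.Icc y z) {y}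
    (by simp [Set.left_mem_Icc, hyz]) (Set.Subsingleton.isChain (by simp))
  have hy1 : y ∈ c1 := mem_of_maxChainIn hc1 (Set.right_mem_Icc.2 hxy)
    (fun b hb => Or.inr (hc1.1 hb).2)
  have hy2 : y ∈ c2 := mem_of_maxChainIn hc2 (Set.left_mem_Icc.2 hyz)
    (fun b hb => Or.inl (hc2.1 hb).1)
  have hle1 : ∀ b ∈ c1, b ≤ y := fun b hb => (hc1.1 hb).2
  have hle2 : ∀ b ∈ c2, y ≤ b := fun b hb => (hc2.1 hb).1
  have hmax : IsMaxChainIn (Set.Icc x z) (c1 ∪ c2) := by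
    refine ⟨?_, ?_, ?_⟩
    · intro b hb
      simp only [coe_union, Set.mem_union, mem_coe] at hb
      rcases hb with hb | hb
      · exact Set.Icc_subset_Icc_right hyz (hc1.1 hb)
      · exact Set.Icc_subset_Icc_left hxy (hc2.1 hb)
    · intro a ha b hb hab
      simp only [coe_union, Set.mem_union, mem_coe] at ha hb
      rcases ha with ha | ha <;> rcases hb with hb | hb
      · exact hc1.2.1 ha hb hab
      · exact Or.inl ((hle1 a ha).trans (hle2 b hb))
      · exact Or.inr ((hle1 b hb).trans (hle2 a ha))
      · exact hc2.2.1 ha hb hab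
    · intro c' hc'S hc'chain hsub
      have hyc' : y ∈ c' := hsub (Finset.mem_union_left _ hy1)
      have h1 : c1 = c'.filter (· ≤ y) := by
        refine hc1.2.2 _ ?_ (hc'chain.mono (Finset.coe_subset.2 (Finset.filter_subset _ _))) ?_
        · intro b hb
          simp only [coe_filter, Set.mem_setOf_eq, mem_coe] at hb
          exact ⟨(hc'S hb.1).1, hb.2⟩
        · intro b hb
          simp only [mem_filter]
          exact ⟨hsub (Finset.mem_union_left _ hb), hle1 b hb⟩
      have h2 : c2 = c'.filter (y ≤ ·) := by
        refine hc2.2.2 _ ?_ (hc'chain.mono (Finset.coe_subset.2 (Finset.filter_subset _ _))) ?_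
        · intro b hb
          simp only [coe_filter, Set.mem_setOf_eq, mem_coe] at hb
          exact ⟨hb.2, (hc'S hb.1).2⟩
        · intro b hb
          simp only [mem_filter]
          exact ⟨hsub (Finset.mem_union_right _ hb), hle2 b hb⟩
      refine Finset.Subset.antisymm hsub ?_
      intro b hb
      rcases eq_or_ne b y with rfl | hby
      · exact Finset.mem_union_left _ hy1
      rcases hc'chain hb hyc' hby with h | h
      · exact Finset.mem_union_left _ (h1 ▸ Finset.mem_filter.2 ⟨hb, h⟩)
      · exact Finset.mem_union_right _ (h2 ▸ Finset.mem_filter.2 ⟨hb, h⟩)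
  have hinter : c1 ∩ c2 = {y} := by
    ext b
    simp only [Finset.mem_inter, Finset.mem_singleton]
    constructor
    · rintro ⟨h1, h2⟩
      exact le_antisymm (hle1 b h1) (hle2 b h2)
    · rintro rfl
      exact ⟨hy1, hy2⟩
  have e1 := hgrad x y hxy c1 hc1
  have e2 := hgrad y z hyz c2 hc2
  have e3 := hgrad x z (hxy.trans hyz) _ hmax
  have e4 := Finset.card_union_add_card_inter c1 c2
  rw [hinter, Finset.card_singleton, e1, e2, e3] at e4
  omega

end Rho

open scoped Classical in
lemma key_formula {α : Type*} [PartialOrder α] [Fintype α] [OrderBot α] {ρ : α → α → ℕ}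
    (hE : LowerEulerianWith α ρ) (hbot : ¬ IsAtom (⊥ : α)) :
    ∀ n (x : α) (hx : ¬ IsAtom x), ρ ⊥ x ≤ n → ⊥ < x →
      pmu {y : α // ¬ IsAtom y} ⟨⊥, hbot⟩ ⟨x, hx⟩ =
        -(-1 : ℤ) ^ (ρ ⊥ x) *
          (((univ.filter fun t : α => IsAtom t ∧ t ≤ x).card : ℤ) - 1) := by
  have hgrad : ∀ a b : α, a ≤ b → IntervalGraded a b (ρ a b) := fun a b h => (hE a b h).1
  intro n
  induction n using Nat.strong_induction_on with
  | _ n IH =>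
  intro x hx hρn hbx
  set A : α → ℤ := fun z => ((univ.filter fun t : α => IsAtom t ∧ t ≤ z).card : ℤ) with hA
  set s : α → ℤ := fun z => (-1 : ℤ) ^ (ρ ⊥ z) with hs
  set I : Finset α := univ.filter (fun z => ⊥ ≤ z ∧ z ≤ x) with hI
  -- basic rank facts
  have hρ2 : 2 ≤ ρ ⊥ x := by
    have h1 := rho_pos hgrad hbx
    have h2 : ρ ⊥ x ≠ 1 := fun h => hx (bot_covBy_iff.1 (cov_of_rho_one hgrad bot_le h))
    omega
  -- E0
  have E0 : ∑ z ∈ I, s z = 0 := by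
    rw [← pmu_sum_filter (β := α) ⊥ x hbx.ne]
    refine Finset.sum_congr rfl fun z hz => ?_
    rw [hs]
    exact ((hE ⊥ z (Finset.mem_filter.1 hz).2.1).2).symm
  -- Eatom
  have Eatom : ∀ t : α, IsAtom t → t ≤ x →
      ∑ z ∈ univ.filter (fun z => t ≤ z ∧ z ≤ x), s z = 0 := by
    intro t ht htx
    have htne : t ≠ x := fun h => hx (h ▸ ht)
    have h0 := pmu_sum_filter (β := α) t x htne
    have hρt : ρ ⊥ t = 1 := rho_cov hgrad ht.bot_covBy
    have : ∑ z ∈ univ.filter (fun z => t ≤ z ∧ z ≤ x), s z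
        = ∑ z ∈ univ.filter (fun z => t ≤ z ∧ z ≤ x), -(pmu α t z) := by
      refine Finset.sum_congr rfl fun z hz => ?_
      have hz' := (Finset.mem_filter.1 hz).2
      have hadd := rho_add hgrad (bot_le (a := t)) hz'.1
      have hz2 : ρ ⊥ z = 1 + ρ t z := by omega
      simp only [hs]
      rw [(hE t z hz'.1).2, hz2, pow_add, pow_one]
      ring
    rw [this, Finset.sum_neg_distrib, h0, neg_zero]
  -- E1
  have E1 : ∑ z ∈ I, s z * A z = 0 := by
    have hAz : ∀ z : α, A z = ∑ t ∈ univ.filter (fun t : α => IsAtom t),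
        (if t ≤ z then (1 : ℤ) else 0) := by
      intro z
      rw [Finset.sum_boole, Finset.filter_filter, hA]
    calc ∑ z ∈ I, s z * A z
        = ∑ z ∈ I, ∑ t ∈ univ.filter (fun t : α => IsAtom t),
            (if t ≤ z then s z else 0) := by
          refine Finset.sum_congr rfl fun z hz => ?_
          rw [hAz z, Finset.mul_sum]
          exact Finset.sum_congr rfl fun t ht => by rw [mul_ite, mul_one, mul_zero]
      _ = ∑ t ∈ univ.filter (fun t : α => IsAtom t), ∑ z ∈ I,
            (if t ≤ z then s z else 0) := Finset.sum_comm
      _ = 0 := by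
          refine Finset.sum_eq_zero fun t ht => ?_
          rw [← Finset.sum_filter]
          have hIf : I.filter (fun z => t ≤ z) = univ.filter (fun z => t ≤ z ∧ z ≤ x) := by
            ext z
            simp only [hI, Finset.mem_filter, Finset.mem_univ, true_and]
            exact ⟨fun h => ⟨h.2, h.1.2⟩, fun h => ⟨⟨bot_le, h.2⟩, h.1⟩⟩
          rw [hIf]
          by_cases htx : t ≤ x
          · exact Eatom t (Finset.mem_filter.1 ht).2 htx
          · rw [Finset.filter_false_of_mem, Finset.sum_empty]
            rintro z _ ⟨h1, h2⟩
            exact htx (h1.trans h2)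
  -- combined
  have Esub : ∑ z ∈ I, s z * (A z - 1) = 0 := by
    have : ∑ z ∈ I, s z * (A z - 1) = ∑ z ∈ I, (s z * A z - s z) :=
      Finset.sum_congr rfl fun z _ => by ring
    rw [this, Finset.sum_sub_distrib, E0, E1, sub_zero]
  -- atoms contribute zero
  have hAatom : ∀ z : α, IsAtom z → A z = 1 := by
    intro z hz
    have : (univ.filter fun t : α => IsAtom t ∧ t ≤ z) = {z} := by
      ext t
      simp only [Finset.mem_filter, Finset.mem_univ, true_and, Finset.mem_singleton]
      constructor
      · rintro ⟨ht, hle⟩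
        rcases eq_or_lt_of_le hle with rfl | hlt
        · rfl
        · exact absurd (hz.2 t hlt) ht.1
      · rintro rfl
        exact ⟨hz, le_rfl⟩
    rw [hA]
    simp only [this, Finset.card_singleton, Nat.cast_one]
  have hAbot : A ⊥ = 0 := by
    have : (univ.filter fun t : α => IsAtom t ∧ t ≤ ⊥) = ∅ := by
      rw [Finset.filter_eq_empty_iff]
      rintro t _ ⟨ht, hle⟩
      exact hbot ((le_bot_iff.1 hle) ▸ ht)
    rw [hA]
    simp only [this, Finset.card_empty, Nat.cast_zero]
  have hsbot : s ⊥ = 1 := by rw [hs]; simp [rho_self hgrad (⊥ : α)]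
  -- split off atoms
  set J2 : Finset α := I.filter (fun z => ¬ IsAtom z) with hJ2
  have hsplit : ∑ z ∈ J2, s z * (A z - 1) = 0 := by
    have h1 := Finset.sum_filter_add_sum_filter_not I (fun z => IsAtom z)
      (fun z => s z * (A z - 1))
    have h2 : ∑ z ∈ I.filter (fun z => IsAtom z), s z * (A z - 1) = 0 := by
      refine Finset.sum_eq_zero fun z hz => ?_
      rw [hAatom z (Finset.mem_filter.1 hz).2]
      ring
    rw [h2, zero_add, Esub] at h1
    exact h1
  have hxI : x ∈ I := by
    simp only [hI, Finset.mem_filter, Finset.mem_univ, true_and]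
    exact ⟨bot_le, le_rfl⟩
  have hbotI : (⊥ : α) ∈ I := by
    simp only [hI, Finset.mem_filter, Finset.mem_univ, true_and]
    exact ⟨le_rfl, hbx.le⟩
  have hxJ2 : x ∈ J2 := Finset.mem_filter.2 ⟨hxI, hx⟩
  have hbotJ2 : (⊥ : α) ∈ (J2.erase x) :=
    Finset.mem_erase.2 ⟨hbx.ne, Finset.mem_filter.2 ⟨hbotI, hbot⟩⟩
  set K : Finset α := (J2.erase x).erase ⊥ with hK
  have e1 := Finset.add_sum_erase J2 (fun z => s z * (A z - 1)) hxJ2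
  have e2 := Finset.add_sum_erase (J2.erase x) (fun z => s z * (A z - 1)) hbotJ2
  have hKsum : ∑ z ∈ K, s z * (A z - 1) = 1 - s x * (A x - 1) := by
    rw [← hK] at e2
    rw [hsbot, hAbot] at e2
    rw [← e2] at e1
    rw [hsplit] at e1
    linarith
  -- the Q side
  set B : {y : α // ¬ IsAtom y} := ⟨⊥, hbot⟩ with hB
  set X : {y : α // ¬ IsAtom y} := ⟨x, hx⟩ with hX
  have hBX : B ≠ X := fun h => hbx.ne (congrArg Subtype.val h)
  have hq := pmu_sum_filter (β := {y : α // ¬ IsAtom y}) B X hBX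
  set J : Finset {y : α // ¬ IsAtom y} := univ.filter (fun w => B ≤ w ∧ w ≤ X) with hJ
  have hXJ : X ∈ J := by
    simp only [hJ, Finset.mem_filter, Finset.mem_univ, true_and]
    exact ⟨Subtype.mk_le_mk.2 bot_le, le_rfl⟩
  have hBJ : B ∈ J.erase X := by
    refine Finset.mem_erase.2 ⟨hBX, ?_⟩
    simp only [hJ, Finset.mem_filter, Finset.mem_univ, true_and]
    exact ⟨le_rfl, Subtype.mk_le_mk.2 hbx.le⟩
  set K' : Finset {y : α // ¬ IsAtom y} := (J.erase X).erase B with hK'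
  have e3 := Finset.add_sum_erase J (fun w => pmu _ B w) hXJ
  have e4 := Finset.add_sum_erase (J.erase X) (fun w => pmu _ B w) hBJ
  -- transfer the middle sum
  have hKim : K = K'.image Subtype.val := by
    ext z
    simp only [hK, hK', hJ, hJ2, hI, Finset.mem_image, Finset.mem_erase, Finset.mem_filter,
      Finset.mem_univ, true_and]
    constructor
    · rintro ⟨hz1, hz2, ⟨hz3, hz4⟩, hz5⟩
      refine ⟨⟨z, hz5⟩, ⟨?_, ?_, ?_, ?_⟩, rfl⟩
      · exact fun h => hz1 (congrArg Subtype.val h)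
      · exact fun h => hz2 (congrArg Subtype.val h)
      · exact Subtype.mk_le_mk.2 hz3
      · exact Subtype.mk_le_mk.2 hz4
    · rintro ⟨w, ⟨hw1, hw2, hw3, hw4⟩, rfl⟩
      refine ⟨?_, ?_, ⟨?_, ?_⟩, w.2⟩
      · exact fun h => hw1 (Subtype.ext h)
      · exact fun h => hw2 (Subtype.ext h)
      · exact Subtype.coe_le_coe.2 hw3
      · exact Subtype.coe_le_coe.2 hw4
  have hKterm : ∀ w ∈ K', pmu {y : α // ¬ IsAtom y} B w = -(s w.val * (A w.val - 1)) := by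
    intro w hw
    rw [hK', Finset.mem_erase, Finset.mem_erase, hJ, Finset.mem_filter] at hw
    obtain ⟨hw1, hw2, -, hw3, hw4⟩ := hw
    have hbw : (⊥ : α) < w.val :=
      lt_of_le_of_ne (Subtype.coe_le_coe.2 hw3) (fun h => hw1 (Subtype.ext h.symm))
    have hwx : w.val < x :=
      lt_of_le_of_ne (Subtype.coe_le_coe.2 hw4) (fun h => hw2 (Subtype.ext h))
    have hadd := rho_add hgrad (bot_le (a := w.val)) hwx.le
    have hpos := rho_pos hgrad hwx
    have hlt : ρ ⊥ w.val < n := by omega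
    have := IH (ρ ⊥ w.val) hlt w.val w.2 le_rfl hbw
    rw [this]
    simp only [hs, hA]
    ring
  have hKsum' : ∑ w ∈ K', pmu {y : α // ¬ IsAtom y} B w = s x * (A x - 1) - 1 := by
    rw [Finset.sum_congr rfl hKterm, Finset.sum_neg_distrib]
    have : ∑ w ∈ K', s w.val * (A w.val - 1) = ∑ z ∈ K, s z * (A z - 1) := by
      rw [hKim, Finset.sum_image (fun a _ b _ h => Subtype.ext h)]
    rw [this, hKsum]
    ring
  -- final arithmetic
  rw [← hK'] at e4
  rw [pmu_self] at e4
  rw [← e4] at e3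
  rw [hq] at e3
  rw [hKsum'] at e3
  have : pmu {y : α // ¬ IsAtom y} B X = -(s x * (A x - 1)) := by linarith
  rw [this]
  simp only [hs, hA]
  ring

open scoped Classical in
/-- If `P` is a finite Eulerian poset of rank `d ≥ 2` and `Q` is `P` minus
its atoms, then `μ_Q(0̂,1̂) = (-1)^{d-1} (f₀(P) - 1)` where `f₀(P)` is the number of atoms. -/
theorem stmt1 (α : Type*) [PartialOrder α] [Fintype α] [BoundedOrder α]
    (ρ : α → α → ℕ) (hE : LowerEulerianWith α ρ) (d : ℕ) (hd : 2 ≤ d)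
    (hrank : ρ ⊥ ⊤ = d) (hgr : GradedRank (Set.univ : Set α) d)
    (hbot : ¬ IsAtom (⊥ : α)) (htop : ¬ IsAtom (⊤ : α)) :
    pmu {x : α // ¬ IsAtom x} ⟨⊥, hbot⟩ ⟨⊤, htop⟩ =
      (-1 : ℤ) ^ (d - 1) * (((Finset.univ.filter fun x : α => IsAtom x).card : ℤ) - 1) := by
  have hgrad : ∀ a b : α, a ≤ b → IntervalGraded a b (ρ a b) := fun a b h => (hE a b h).1
  have hne : (⊥ : α) ≠ ⊤ := by
    intro h
    have h0 : ρ ⊥ ⊤ = 0 := by rw [← h]; exact rho_self hgrad (⊥ : α)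
    omega
  have key := key_formula hE hbot (ρ ⊥ ⊤) ⊤ htop le_rfl (bot_le.lt_of_ne hne)
  rw [key, hrank]
  have hcard : (univ.filter fun t : α => IsAtom t ∧ t ≤ ⊤)
      = univ.filter (fun x : α => IsAtom x) := by
    ext t
    simp [le_top]
  rw [hcard]
  have hpow : (-1 : ℤ) ^ d = -(-1 : ℤ) ^ (d - 1) := by
    conv_lhs => rw [show d = (d - 1) + 1 by omega]
    rw [pow_succ]
    ring
  rw [hpow]
  ring
end

section
/- For every finite poset P, the order complex of Int(P), the poset of nonempty closed intervals of P ordered by inclusion, is homeomorphic to the order complex of P. -/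
open Finset

variable {α : Type*} [PartialOrder α]

/-- The poset of nonempty closed intervals `[x, y]` of `α`, ordered by inclusion. -/
def Intvl (α : Type*) [Preorder α] : Type _ := {p : α × α // p.1 ≤ p.2}

namespace Intvl

variable {α : Type*} [PartialOrder α]

instance : PartialOrder (Intvl α) where
  le i j := j.1.1 ≤ i.1.1 ∧ i.1.2 ≤ j.1.2
  le_refl i := ⟨le_refl _, le_refl _⟩
  le_trans i j l h1 h2 := ⟨le_trans h2.1 h1.1, le_trans h1.2 h2.2⟩
  le_antisymm i j h1 h2 := Subtype.ext (Prod.ext (le_antisymm h2.1 h1.1) (le_antisymm h1.2 h2.2))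

instance [Finite α] : Finite (Intvl α) := Subtype.finite

end Intvl

open scoped Classical in
/-- The order complex of the subposet `S`: the collection of finite chains contained in `S`. -/
noncomputable def chainsIn {α : Type*} [PartialOrder α] [Fintype α] (S : Set α) :
    Finset (Finset α) :=
  Finset.univ.filter fun s => ↑s ⊆ S ∧ IsChain (· ≤ ·) (s : Set α)

/-- The reduced Euler characteristic of a finite simplicial complex
(`χ̃ = Σ_{σ ∈ K} (-1)^{|σ|-1}`, the empty face contributing `-1`). -/
def redEuler {V : Type*} (K : Finset (Finset V)) : ℤ :=
  -∑ s ∈ K, (-1 : ℤ) ^ s.card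

/-- The geometric realization of a finite simplicial complex `K`, as the space of convex
weightings supported on faces of `K`, topologized as a subspace of `V → ℝ`. -/
def realiz {V : Type*} [Fintype V] (K : Finset (Finset V)) : Type _ :=
  {f : V → ℝ // (∃ s ∈ K, ∀ v, f v ≠ 0 → v ∈ s) ∧ (∀ v, 0 ≤ f v) ∧ ∑ v, f v = 1}

instance {V : Type*} [Fintype V] (K : Finset (Finset V)) : TopologicalSpace (realiz K) :=
  instTopologicalSpaceSubtype

section AuxProof
open scoped Classical

variable {α : Type*} [PartialOrder α]

lemma intvl_le_def {I J : Intvl α} : I ≤ J ↔ J.1.1 ≤ I.1.1 ∧ I.1.2 ≤ J.1.2 := Iff.rfl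

lemma intvl_ext {I J : Intvl α} (h : I.1 = J.1) : I = J := Subtype.ext h

noncomputable def wcoef (I : Intvl α) (v : α) : ℝ :=
  (if I.1.1 = v then (1:ℝ) else 0) / 2 + (if I.1.2 = v then (1:ℝ) else 0) / 2

lemma wcoef_nonneg (I : Intvl α) (v : α) : 0 ≤ wcoef I v := by
  unfold wcoef; split_ifs <;> norm_num

lemma wcoef_eq_zero {I : Intvl α} {v : α} (h1 : I.1.1 ≠ v) (h2 : I.1.2 ≠ v) :
    wcoef I v = 0 := by unfold wcoef; rw [if_neg h1, if_neg h2]; norm_num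

lemma wcoef_left_ge (I : Intvl α) : (2:ℝ)⁻¹ ≤ wcoef I I.1.1 := by
  unfold wcoef; split_ifs <;> simp_all <;> norm_num

lemma wcoef_right_ge (I : Intvl α) : (2:ℝ)⁻¹ ≤ wcoef I I.1.2 := by
  unfold wcoef; split_ifs <;> simp_all <;> norm_num

lemma wcoef_left_pos (I : Intvl α) : 0 < wcoef I I.1.1 :=
  lt_of_lt_of_le (by norm_num) (wcoef_left_ge I)

lemma wcoef_self_symm (I : Intvl α) : wcoef I I.1.1 = wcoef I I.1.2 := by
  unfold wcoef
  by_cases h : I.1.1 = I.1.2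
  · rw [h]
  · simp [h, Ne.symm h]

lemma sum_wcoef [Fintype α] (I : Intvl α) : ∑ v, wcoef I v = 1 := by
  unfold wcoef
  rw [Finset.sum_add_distrib]
  have h1 : ∀ a : α, ∑ v, (if a = v then (1:ℝ) else 0) / 2 = 1 / 2 := by
    intro a
    rw [← Finset.sum_div, Finset.sum_ite_eq Finset.univ a fun _ => (1:ℝ),
      if_pos (Finset.mem_univ a)]
  rw [h1, h1]; norm_num

noncomputable def phiF [Fintype (Intvl α)] (f : Intvl α → ℝ) (v : α) : ℝ :=
  ∑ I, f I * wcoef I v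

variable [Fintype (Intvl α)]

lemma phiF_nonneg {f : Intvl α → ℝ} (hf : ∀ I, 0 ≤ f I) (v : α) : 0 ≤ phiF f v :=
  Finset.sum_nonneg fun I _ => mul_nonneg (hf I) (wcoef_nonneg I v)

lemma phiF_add (f g : Intvl α → ℝ) (v : α) : phiF (f + g) v = phiF f v + phiF g v := by
  unfold phiF; rw [← Finset.sum_add_distrib]
  exact Finset.sum_congr rfl fun I _ => by simp [add_mul]

lemma sum_phiF [Fintype α] (f : Intvl α → ℝ) : ∑ v, phiF f v = ∑ I, f I := by
  unfold phiF
  rw [Finset.sum_comm]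
  exact Finset.sum_congr rfl fun I _ => by rw [← Finset.mul_sum, sum_wcoef, mul_one]

lemma phiF_single_le {f : Intvl α → ℝ} (hf : ∀ I, 0 ≤ f I) (I : Intvl α) (v : α) :
    f I * wcoef I v ≤ phiF f v :=
  Finset.single_le_sum (fun J _ => mul_nonneg (hf J) (wcoef_nonneg J v)) (Finset.mem_univ I)

lemma phiF_ne_zero {f : Intvl α → ℝ} {v : α} (h : phiF f v ≠ 0) :
    ∃ I, f I ≠ 0 ∧ (I.1.1 = v ∨ I.1.2 = v) := by
  by_contra hc
  push_neg at hc
  apply h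
  unfold phiF
  apply Finset.sum_eq_zero
  intro I _
  by_cases hfI : f I = 0
  · rw [hfI, zero_mul]
  · have h2 := hc I hfI
    rw [wcoef_eq_zero h2.1 h2.2, mul_zero]

lemma endpoints_comp {I I' : Intvl α} (h : I ≤ I') {v v' : α}
    (he : I.1.1 = v ∨ I.1.2 = v) (he' : I'.1.1 = v' ∨ I'.1.2 = v') : v ≤ v' ∨ v' ≤ v := by
  rcases he' with rfl | rfl
  · right
    rcases he with rfl | rfl
    · exact h.1
    · exact h.1.trans I.2
  · left
    rcases he with rfl | rfl
    · exact I.2.trans h.2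
    · exact h.2

lemma endpoints_chain {f : Intvl α → ℝ} (hc : IsChain (· ≤ ·) {I | f I ≠ 0}) :
    IsChain (· ≤ ·) {v | phiF f v ≠ 0} := by
  intro v hv v' hv' _
  obtain ⟨I, hI, he⟩ := phiF_ne_zero hv
  obtain ⟨I', hI', he'⟩ := phiF_ne_zero hv'
  by_cases hII : I = I'
  · subst hII
    exact endpoints_comp (le_refl I) he he'
  · rcases hc hI hI' hII with h | h
    · exact endpoints_comp h he he'
    · exact (endpoints_comp h he' he).symm

end AuxProof
section AuxProof2
open scoped Classical

variable {α : Type*} [PartialOrder α] [Fintype (Intvl α)]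

lemma exists_greatest {f : Intvl α → ℝ} (hc : IsChain (· ≤ ·) {I | f I ≠ 0})
    (hne : f ≠ 0) : ∃ M, f M ≠ 0 ∧ ∀ I, f I ≠ 0 → I ≤ M := by
  classical
  set s : Finset (Intvl α) := Finset.univ.filter (f · ≠ 0) with hs
  have hsn : s.Nonempty := by
    obtain ⟨I, hI⟩ := Function.ne_iff.mp hne
    have hI' : f I ≠ 0 := by simpa using hI
    exact ⟨I, by simp [hs, hI']⟩
  obtain ⟨M, hM, hmax⟩ := s.exists_maximal hsn
  have hMs : f M ≠ 0 := by simpa [hs] using hM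
  refine ⟨M, hMs, fun I hI => ?_⟩
  by_cases h : I = M
  · exact h ▸ le_refl M
  · rcases hc hI hMs h with hle | hle
    · exact hle
    · exact hmax (by simp [hs, hI]) hle

lemma supp_bounds {f : Intvl α → ℝ} (hf : ∀ I, 0 ≤ f I) {M : Intvl α}
    (hM : f M ≠ 0) (hmax : ∀ I, f I ≠ 0 → I ≤ M) :
    phiF f M.1.1 ≠ 0 ∧ phiF f M.1.2 ≠ 0 ∧
      ∀ v, phiF f v ≠ 0 → M.1.1 ≤ v ∧ v ≤ M.1.2 := by
  have hMpos : 0 < f M := (hf M).lt_of_ne (Ne.symm hM)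
  have h1 : 0 < phiF f M.1.1 :=
    lt_of_lt_of_le (mul_pos hMpos (wcoef_left_pos M)) (phiF_single_le hf M M.1.1)
  have h2 : 0 < phiF f M.1.2 := by
    refine lt_of_lt_of_le (mul_pos hMpos ?_) (phiF_single_le hf M M.1.2)
    exact lt_of_lt_of_le (by norm_num) (wcoef_right_ge M)
  refine ⟨h1.ne', h2.ne', fun v hv => ?_⟩
  obtain ⟨I, hI, he⟩ := phiF_ne_zero hv
  have hle := hmax I hI
  rcases he with rfl | rfl
  · exact ⟨hle.1, I.2.trans hle.2⟩
  · exact ⟨hle.1.trans I.2, hle.2⟩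

lemma min_formula {f : Intvl α → ℝ} (hf : ∀ I, 0 ≤ f I)
    (hc : IsChain (· ≤ ·) {I | f I ≠ 0}) {M : Intvl α}
    (hM : f M ≠ 0) (hmax : ∀ I, f I ≠ 0 → I ≤ M) :
    min (phiF f M.1.1) (phiF f M.1.2) = f M * wcoef M M.1.1 := by
  have ha : f M * wcoef M M.1.1 ≤ phiF f M.1.1 := phiF_single_le hf M M.1.1
  have hb : f M * wcoef M M.1.2 ≤ phiF f M.1.2 := phiF_single_le hf M M.1.2
  have hsymm := wcoef_self_symm M
  have key : (∀ I, f I ≠ 0 → I ≠ M → ¬(I.1.1 = M.1.2 ∨ I.1.2 = M.1.2)) ∨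
      (∀ I, f I ≠ 0 → I ≠ M → ¬(I.1.1 = M.1.1 ∨ I.1.2 = M.1.1)) := by
    by_contra hcon
    push_neg at hcon
    obtain ⟨⟨I, hI, hIM, hItB⟩, ⟨I', hI', hI'M, hI'tA⟩⟩ := hcon
    have hIle := hmax I hI
    have hI'le := hmax I' hI'
    have hI2 : I.1.2 = M.1.2 := by
      rcases hItB with h | h
      · exact le_antisymm hIle.2 (h ▸ I.2)
      · exact h
    have hI'1 : I'.1.1 = M.1.1 := by
      rcases hI'tA with h | h
      · exact h
      · exact le_antisymm (h ▸ I'.2) hI'le.1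
    by_cases hII : I = I'
    · subst hII
      exact hIM (intvl_ext (Prod.ext hI'1 hI2))
    · rcases hc hI hI' hII with h | h
      · exact hI'M (intvl_ext (Prod.ext hI'1 (le_antisymm hI'le.2 (hI2 ▸ h.2))))
      · exact hIM (intvl_ext (Prod.ext (le_antisymm (hI'1 ▸ h.1) hIle.1) hI2))
  rcases key with hkey | hkey
  · have heq : phiF f M.1.2 = f M * wcoef M M.1.2 := by
      unfold phiF
      apply Finset.sum_eq_single M
      · intro I _ hIM
        by_cases hfI : f I = 0
        · rw [hfI, zero_mul]
        · have h3 := hkey I hfI hIM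
          push_neg at h3
          rw [wcoef_eq_zero h3.1 h3.2, mul_zero]
      · intro h; exact absurd (Finset.mem_univ M) h
    rw [heq, ← hsymm]
    exact min_eq_right ha
  · have heq : phiF f M.1.1 = f M * wcoef M M.1.1 := by
      unfold phiF
      apply Finset.sum_eq_single M
      · intro I _ hIM
        by_cases hfI : f I = 0
        · rw [hfI, zero_mul]
        · have h3 := hkey I hfI hIM
          push_neg at h3
          rw [wcoef_eq_zero h3.1 h3.2, mul_zero]
      · intro h; exact absurd (Finset.mem_univ M) h
    rw [heq]
    rw [hsymm] at heq ⊢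
    exact min_eq_left (heq ▸ hb)

lemma phiF_zero {f : Intvl α → ℝ} (hf : ∀ I, 0 ≤ f I) (h : ∀ v, phiF f v = 0) : f = 0 := by
  funext I
  have h1 := h I.1.1
  unfold phiF at h1
  have hall := (Finset.sum_eq_zero_iff_of_nonneg
    (fun J _ => mul_nonneg (hf J) (wcoef_nonneg J I.1.1))).mp h1 I (Finset.mem_univ I)
  exact (mul_eq_zero.mp hall).resolve_right (wcoef_left_pos I).ne'

lemma phiF_update (f : Intvl α → ℝ) (M : Intvl α) (v : α) :
    phiF (Function.update f M 0) v = phiF f v - f M * wcoef M v := by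
  unfold phiF
  have h1 : (fun I => Function.update f M 0 I * wcoef I v) =
      Function.update (fun I => f I * wcoef I v) M 0 := by
    funext J
    by_cases hJ : J = M
    · subst hJ; simp
    · rw [Function.update_of_ne hJ, Function.update_of_ne hJ]
  rw [h1, Finset.sum_update_of_mem (Finset.mem_univ M)]
  rw [Finset.sdiff_singleton_eq_erase]
  rw [← Finset.add_sum_erase _ (fun I => f I * wcoef I v) (Finset.mem_univ M)]
  ring

lemma phiF_inj : ∀ (n : ℕ) (f f' : Intvl α → ℝ),
    (Finset.univ.filter (f · ≠ 0)).card ≤ n →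
    (∀ I, 0 ≤ f I) → IsChain (· ≤ ·) {I | f I ≠ 0} →
    (∀ I, 0 ≤ f' I) → IsChain (· ≤ ·) {I | f' I ≠ 0} →
    (∀ v, phiF f v = phiF f' v) → f = f' := by
  intro n
  induction n with
  | zero =>
    intro f f' hcard hf hcf hf' hcf' heq
    have hf0 : f = 0 := by
      funext I
      by_contra hI
      simp only [Pi.zero_apply] at hI
      have : I ∈ Finset.univ.filter (f · ≠ 0) := by simp [hI]
      have := Finset.card_pos.mpr ⟨I, this⟩
      omega
    have : f' = 0 := by
      apply phiF_zero hf'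
      intro v
      rw [← heq v, hf0]
      simp [phiF]
    rw [hf0, this]
  | succ n ih =>
    intro f f' hcard hf hcf hf' hcf' heq
    by_cases h0 : f = 0
    · have : f' = 0 := by
        apply phiF_zero hf'
        intro v
        rw [← heq v, h0]
        simp [phiF]
      rw [h0, this]
    · obtain ⟨M, hM, hmax⟩ := exists_greatest hcf h0
      have hsb := supp_bounds hf hM hmax
      have hphif'0 : f' ≠ 0 := by
        rintro rfl
        exact hsb.1 (by rw [heq M.1.1]; simp [phiF])
      obtain ⟨M', hM', hmax'⟩ := exists_greatest hcf' hphif'0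
      have hsb' := supp_bounds hf' hM' hmax'
      have hM1 : M.1.1 = M'.1.1 :=
        le_antisymm ((hsb.2.2 M'.1.1 (by rw [heq]; exact hsb'.1)).1)
          ((hsb'.2.2 M.1.1 (by rw [← heq]; exact hsb.1)).1)
      have hM2 : M.1.2 = M'.1.2 :=
        le_antisymm ((hsb'.2.2 M.1.2 (by rw [← heq]; exact hsb.2.1)).2)
          ((hsb.2.2 M'.1.2 (by rw [heq]; exact hsb'.2.1)).2)
      have hMM : M' = M := intvl_ext (Prod.ext hM1.symm hM2.symm)
      rw [hMM] at hM' hmax' hsb'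
      have hfM : f M = f' M := by
        have e1 := min_formula hf hcf hM hmax
        have e2 := min_formula hf' hcf' hM' hmax'
        rw [heq M.1.1, heq M.1.2] at e1
        have := e1.symm.trans e2
        exact mul_right_cancel₀ (wcoef_left_pos M).ne' this
      set g := Function.update f M 0 with hg
      set g' := Function.update f' M 0 with hg'
      have hgcard : (Finset.univ.filter (g · ≠ 0)).card ≤ n := by
        have hsub : Finset.univ.filter (g · ≠ 0) =
            (Finset.univ.filter (f · ≠ 0)).erase M := by
          ext I
          by_cases hIM : I = M
          · subst hIM; simp [hg]
          · simp [hg, Function.update_of_ne hIM, hIM]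
        rw [hsub, Finset.card_erase_of_mem (by simp [hM])]
        omega
      have hgnn : ∀ I, 0 ≤ g I := by
        intro I
        by_cases hIM : I = M
        · subst hIM; simp [hg]
        · rw [hg, Function.update_of_ne hIM]; exact hf I
      have hg'nn : ∀ I, 0 ≤ g' I := by
        intro I
        by_cases hIM : I = M
        · subst hIM; simp [hg']
        · rw [hg', Function.update_of_ne hIM]; exact hf' I
      have hgsub : {I | g I ≠ 0} ⊆ {I | f I ≠ 0} := by
        intro I hI
        by_cases hIM : I = M
        · subst hIM; simp [hg] at hI
        · simp only [hg, Set.mem_setOf_eq, Function.update_of_ne hIM] at hI; exact hI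
      have hg'sub : {I | g' I ≠ 0} ⊆ {I | f' I ≠ 0} := by
        intro I hI
        by_cases hIM : I = M
        · subst hIM; simp [hg'] at hI
        · simp only [hg', Set.mem_setOf_eq, Function.update_of_ne hIM] at hI; exact hI
      have hgc : IsChain (· ≤ ·) {I | g I ≠ 0} := hcf.mono hgsub
      have hg'c : IsChain (· ≤ ·) {I | g' I ≠ 0} := hcf'.mono hg'sub
      have hgeq : ∀ v, phiF g v = phiF g' v := by
        intro v
        rw [hg, hg', phiF_update, phiF_update, heq v, hfM]
      have hgg := ih g g' hgcard hgnn hgc hg'nn hg'c hgeq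
      funext I
      by_cases hIM : I = M
      · subst hIM; exact hfM
      · have := congrFun hgg I
        rwa [hg, hg', Function.update_of_ne hIM, Function.update_of_ne hIM] at this

end AuxProof2
section AuxProof3
open scoped Classical

variable {α : Type*} [PartialOrder α]

/-- delta function on intervals, specified by a pair. -/
noncomputable def dlt (pz : α × α) (c : ℝ) : Intvl α → ℝ :=
  fun I => if I.1 = pz then c else 0

lemma dlt_nonneg {pz : α × α} {c : ℝ} (hc : 0 ≤ c) (I : Intvl α) : 0 ≤ dlt pz c I := by
  unfold dlt; split_ifs <;> [exact hc; exact le_rfl]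

lemma dlt_ne_zero {pz : α × α} {c : ℝ} {I : Intvl α} (h : dlt pz c I ≠ 0) : I.1 = pz := by
  by_contra hne
  exact h (if_neg hne)

lemma phiF_dlt [Fintype (Intvl α)] (pz : α × α) (h : pz.1 ≤ pz.2) (c : ℝ) (v : α) :
    phiF (dlt pz c) v = c * wcoef ⟨pz, h⟩ v := by
  have key : ∑ I : Intvl α, dlt pz c I * wcoef I v
      = dlt pz c ⟨pz, h⟩ * wcoef ⟨pz, h⟩ v := by
    apply Finset.sum_eq_single
    · intro I _ hne
      rw [show dlt pz c I = 0 from if_neg (fun hc => hne (intvl_ext hc)), zero_mul]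
    · intro hm; exact absurd (Finset.mem_univ _) hm
  unfold phiF
  rw [key]
  simp [dlt]

/-- the weight function of a list of (vertex, weight) pairs -/
noncomputable def wfun (l : List (α × ℝ)) (v : α) : ℝ :=
  (l.map fun p => if p.1 = v then p.2 else 0).sum

lemma wfun_nil (v : α) : wfun ([] : List (α × ℝ)) v = 0 := rfl

lemma wfun_cons (p : α × ℝ) (t : List (α × ℝ)) (v : α) :
    wfun (p :: t) v = (if p.1 = v then p.2 else 0) + wfun t v := by simp [wfun]

lemma wfun_append (s t : List (α × ℝ)) (v : α) :
    wfun (s ++ t) v = wfun s v + wfun t v := by simp [wfun]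

/-- the folding construction -/
noncomputable def build : ℕ → List (α × ℝ) → Intvl α → ℝ
  | 0, _ => 0
  | _+1, [] => 0
  | _+1, [p] => dlt (p.1, p.1) p.2
  | n+1, p :: q :: rest =>
      dlt (p.1, ((q :: rest).getLast (List.cons_ne_nil q rest)).1)
          (2 * min p.2 ((q :: rest).getLast (List.cons_ne_nil q rest)).2) +
        build n
          (if p.2 < ((q :: rest).getLast (List.cons_ne_nil q rest)).2 then
             (q :: rest).dropLast ++ [(((q :: rest).getLast (List.cons_ne_nil q rest)).1,
               ((q :: rest).getLast (List.cons_ne_nil q rest)).2 - p.2)]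
           else if ((q :: rest).getLast (List.cons_ne_nil q rest)).2 < p.2 then
             (p.1, p.2 - ((q :: rest).getLast (List.cons_ne_nil q rest)).2) :: (q :: rest).dropLast
           else (q :: rest).dropLast)

lemma build_spec [Fintype α] [Fintype (Intvl α)] (n : ℕ) :
    ∀ l : List (α × ℝ), l.length ≤ n →
    (l.map Prod.fst).Pairwise (· < ·) → (∀ p ∈ l, 0 ≤ p.2) →
    (∀ I, 0 ≤ build n l I) ∧
    (∀ I, build n l I ≠ 0 → ∃ a ∈ l.map Prod.fst, ∃ b ∈ l.map Prod.fst,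
        a ≤ I.1.1 ∧ I.1.2 ≤ b) ∧
    IsChain (· ≤ ·) {I | build n l I ≠ 0} ∧
    (∀ v, phiF (build n l) v = wfun l v) := by
  induction n with
  | zero =>
    intro l hlen _ _
    have hl : l = [] := List.eq_nil_of_length_eq_zero (Nat.le_zero.mp hlen)
    subst hl
    exact ⟨fun I => le_rfl, fun I hI => absurd rfl hI,
      fun I hI => absurd rfl hI, fun v => by simp [phiF, build, wfun_nil]⟩
  | succ n IH =>
    rintro (_ | ⟨p, _ | ⟨q, rest⟩⟩) hlen hpair hnn
    · -- nil
      exact ⟨fun I => le_rfl, fun I hI => absurd rfl hI,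
        fun I hI => absurd rfl hI, fun v => by simp [phiF, build, wfun_nil]⟩
    · -- singleton
      have hp2 : 0 ≤ p.2 := hnn p (List.mem_singleton_self p)
      have hb : build (n+1) [p] = dlt (p.1, p.1) p.2 := rfl
      refine ⟨?_, ?_, ?_, ?_⟩
      · intro I; rw [hb]; exact dlt_nonneg hp2 I
      · intro I hI
        rw [hb] at hI
        have h1 := dlt_ne_zero hI
        refine ⟨p.1, by simp, p.1, by simp, ?_, ?_⟩
        · rw [show I.1.1 = p.1 from congrArg Prod.fst h1]
        · rw [show I.1.2 = p.1 from congrArg Prod.snd h1]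
      · intro I hI I' hI' hne
        rw [Set.mem_setOf_eq, hb] at hI hI'
        exact absurd (intvl_ext ((dlt_ne_zero hI).trans (dlt_ne_zero hI').symm)) hne
      · intro v
        rw [hb, phiF_dlt (p.1, p.1) le_rfl p.2 v, wfun_cons, wfun_nil]
        by_cases h : p.1 = v <;> simp [wcoef, h] <;> ring
    · -- main case
      set L := (q :: rest).getLast (List.cons_ne_nil q rest) with hL
      set mid := (q :: rest).dropLast with hmid
      have hLmem : L ∈ q :: rest := List.getLast_mem _
      have e : mid ++ [L] = q :: rest := List.dropLast_append_getLast _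
      have eF : mid.map Prod.fst ++ [L.1] = (q :: rest).map Prod.fst := by
        rw [← e, List.map_append]; rfl
      obtain ⟨hhead, hpair'⟩ := List.pairwise_cons.mp hpair
      have hvu : p.1 < L.1 := hhead L.1 (List.mem_map_of_mem (f := Prod.fst) hLmem)
      have hpairA : (mid.map Prod.fst ++ [L.1]).Pairwise (· < ·) := by rw [eF]; exact hpair'
      obtain ⟨pmid, -, hcross⟩ := List.pairwise_append.mp hpairA
      have hmidlt : ∀ x ∈ mid.map Prod.fst, x < L.1 := fun x hx =>
        hcross x hx L.1 (List.mem_singleton_self _)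
      have hmidmem : ∀ x ∈ mid, x ∈ q :: rest := by
        intro x hx
        rw [← e]; exact List.mem_append_left _ hx
      have hmidF : ∀ x ∈ mid.map Prod.fst, x ∈ (q :: rest).map Prod.fst := by
        intro x hx
        rw [← eF]; exact List.mem_append_left _ hx
      set c := 2 * min p.2 L.2 with hc
      have hp2 : 0 ≤ p.2 := hnn p List.mem_cons_self
      have hL2 : 0 ≤ L.2 := hnn L (List.mem_cons_of_mem _ hLmem)
      have hc0 : 0 ≤ c := by
        have hmn : 0 ≤ min p.2 L.2 := le_min hp2 hL2
        rw [hc]; linarith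
      set l₂ := (if p.2 < L.2 then mid ++ [(L.1, L.2 - p.2)]
                 else if L.2 < p.2 then (p.1, p.2 - L.2) :: mid else mid) with hl₂
      have hbuild : build (n+1) (p :: q :: rest) = dlt (p.1, L.1) c + build n l₂ := rfl
      have hmidlen : mid.length = rest.length := by
        rw [hmid]; simp
      have hlen' : rest.length + 2 ≤ n + 1 := by simpa using hlen
      have hlen₂ : l₂.length ≤ n := by
        rw [hl₂]; split_ifs <;> simp [hmidlen] <;> omega
      have hpair₂ : (l₂.map Prod.fst).Pairwise (· < ·) := by
        rw [hl₂]; split_ifs with h1 h2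
        · rw [List.map_append]
          simpa using hpairA
        · rw [List.map_cons]
          refine List.pairwise_cons.mpr ⟨?_, pmid⟩
          intro b hb
          exact hhead b (hmidF b hb)
        · exact pmid
      have hnn₂ : ∀ x ∈ l₂, 0 ≤ x.2 := by
        rw [hl₂]; split_ifs with h1 h2 <;> intro x hx
        · rcases List.mem_append.mp hx with h | h
          · exact hnn x (List.mem_cons_of_mem _ (hmidmem x h))
          · rw [List.mem_singleton.mp h]; simp; linarith
        · rcases List.mem_cons.mp hx with h | h
          · rw [h]; simp; linarith
          · exact hnn x (List.mem_cons_of_mem _ (hmidmem x h))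
        · exact hnn x (List.mem_cons_of_mem _ (hmidmem x hx))
      obtain ⟨ih1, ih2, ih3, ih4⟩ := IH l₂ hlen₂ hpair₂ hnn₂
      have hFst₂ : ∀ x ∈ l₂.map Prod.fst, x ∈ (p :: q :: rest).map Prod.fst := by
        intro x hx
        rw [hl₂] at hx
        rw [List.map_cons, List.mem_cons]
        split_ifs at hx with h1 h2
        · rw [List.map_append] at hx
          rcases List.mem_append.mp hx with h | h
          · exact Or.inr (hmidF x h)
          · simp at h
            subst h
            exact Or.inr (List.mem_map_of_mem (f := Prod.fst) hLmem)
        · rw [List.map_cons, List.mem_cons] at hx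
          rcases hx with h | h
          · exact Or.inl h
          · exact Or.inr (hmidF x h)
        · exact Or.inr (hmidF x hx)
      have hbet : ∀ x ∈ l₂.map Prod.fst, p.1 ≤ x ∧ x ≤ L.1 := by
        intro x hx
        constructor
        · have hx' := hFst₂ x hx
          rw [List.map_cons, List.mem_cons] at hx'
          rcases hx' with rfl | h
          · exact le_rfl
          · exact (hhead x h).le
        · rw [hl₂] at hx
          split_ifs at hx with h1 h2
          · rw [List.map_append] at hx
            rcases List.mem_append.mp hx with h | h
            · exact (hmidlt x h).le
            · simp at h; rw [h]
          · rw [List.map_cons, List.mem_cons] at hx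
            rcases hx with rfl | h
            · exact hvu.le
            · exact (hmidlt x h).le
          · exact (hmidlt x hx).le
      have hsup : ∀ I, build (n+1) (p :: q :: rest) I ≠ 0 → I = ⟨(p.1, L.1), hvu.le⟩ ∨
          build n l₂ I ≠ 0 := by
        intro I hI
        rw [hbuild] at hI
        by_cases hd : dlt (p.1, L.1) c I = 0
        · right
          intro h
          exact hI (by simp only [Pi.add_apply]; rw [hd, h, add_zero])
        · left; exact intvl_ext (dlt_ne_zero hd)
      have hle₂ : ∀ I, build n l₂ I ≠ 0 → I ≤ ⟨(p.1, L.1), hvu.le⟩ := by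
        intro I hI
        obtain ⟨a, ha, b, hb, hab1, hab2⟩ := ih2 I hI
        exact intvl_le_def.mpr ⟨le_trans (hbet a ha).1 hab1, le_trans hab2 (hbet b hb).2⟩
      refine ⟨?_, ?_, ?_, ?_⟩
      · intro I
        rw [hbuild]
        exact add_nonneg (dlt_nonneg hc0 I) (ih1 I)
      · intro I hI
        rcases hsup I hI with rfl | h
        · exact ⟨p.1, by simp, L.1, List.mem_map_of_mem (List.mem_cons_of_mem p hLmem),
            le_rfl, le_rfl⟩
        · obtain ⟨a, ha, b, hb, h1, h2⟩ := ih2 I h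
          exact ⟨a, hFst₂ a ha, b, hFst₂ b hb, h1, h2⟩
      · intro I hI I' hI' hne
        rw [Set.mem_setOf_eq] at hI hI'
        rcases hsup I hI with rfl | h1 <;> rcases hsup I' hI' with rfl | h2
        · exact absurd rfl hne
        · exact Or.inr (hle₂ I' h2)
        · exact Or.inl (hle₂ I h1)
        · exact ih3 h1 h2 hne
      · intro v
        rw [hbuild]
        rw [phiF_add, phiF_dlt (p.1, L.1) hvu.le c v, ih4 v]
        have hwl : wfun (p :: q :: rest) v
            = (if p.1 = v then p.2 else 0) + (wfun mid v + (if L.1 = v then L.2 else 0)) := by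
          rw [wfun_cons]
          congr 1
          rw [← e, wfun_append, wfun_cons, wfun_nil, add_zero]
        have hwc : wcoef ⟨(p.1, L.1), hvu.le⟩ v
            = (if p.1 = v then (1:ℝ) else 0)/2 + (if L.1 = v then (1:ℝ) else 0)/2 := rfl
        rw [hwl, hwc, hc]
        rcases lt_trichotomy p.2 L.2 with h1 | h1 | h1
        · have hl₂' : l₂ = mid ++ [(L.1, L.2 - p.2)] := by rw [hl₂, if_pos h1]
          rw [hl₂', wfun_append, wfun_cons, wfun_nil, add_zero,
            min_eq_left h1.le]
          by_cases hv1 : p.1 = v <;> by_cases hv2 : L.1 = v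
          · exact absurd (hv1.trans hv2.symm) hvu.ne
          · simp only [hv1, hv2, if_true, if_false, eq_self_iff_true, ite_true, ite_false]; ring
          · simp only [hv1, hv2, if_true, if_false, eq_self_iff_true, ite_true, ite_false]; ring
          · simp only [hv1, hv2, if_true, if_false, eq_self_iff_true, ite_true, ite_false]; ring
        · have hl₂' : l₂ = mid := by
            rw [hl₂, if_neg (by rw [h1]; exact lt_irrefl _),
              if_neg (by rw [h1]; exact lt_irrefl _)]
          rw [hl₂', min_eq_left (le_of_eq h1)]
          by_cases hv1 : p.1 = v <;> by_cases hv2 : L.1 = v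
          · exact absurd (hv1.trans hv2.symm) hvu.ne
          · simp only [hv1, hv2, if_true, if_false, eq_self_iff_true, ite_true, ite_false]; ring
          · simp only [hv1, hv2, if_true, if_false, eq_self_iff_true, ite_true, ite_false]
            rw [h1]; ring
          · simp only [hv1, hv2, if_true, if_false, eq_self_iff_true, ite_true, ite_false]; ring
        · have hl₂' : l₂ = (p.1, p.2 - L.2) :: mid := by
            rw [hl₂, if_neg (lt_asymm h1), if_pos h1]
          rw [hl₂', wfun_cons, min_eq_right h1.le]
          by_cases hv1 : p.1 = v <;> by_cases hv2 : L.1 = v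
          · exact absurd (hv1.trans hv2.symm) hvu.ne
          · simp only [hv1, hv2, if_true, if_false, eq_self_iff_true, ite_true, ite_false]; ring
          · simp only [hv1, hv2, if_true, if_false, eq_self_iff_true, ite_true, ite_false]; ring
          · simp only [hv1, hv2, if_true, if_false, eq_self_iff_true, ite_true, ite_false]; ring

lemma sorted_of_chain : ∀ (n : ℕ) (s : Finset α), s.card ≤ n →
    IsChain (· ≤ ·) (↑s : Set α) →
    ∃ l : List α, l.Pairwise (· < ·) ∧ ∀ v, v ∈ l ↔ v ∈ s := by
  intro n
  induction n with
  | zero =>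
    intro s hcard _
    have hs : s = ∅ := Finset.card_eq_zero.mp (Nat.le_zero.mp hcard)
    exact ⟨[], List.Pairwise.nil, by simp [hs]⟩
  | succ n ih =>
    intro s hcard hchain
    rcases s.eq_empty_or_nonempty with rfl | hne
    · exact ⟨[], List.Pairwise.nil, by simp⟩
    · obtain ⟨m, hm, hmin⟩ := s.exists_minimal hne
      have hleast : ∀ x ∈ s, m ≤ x := by
        intro x hx
        by_cases hxm : x = m
        · exact hxm ▸ le_rfl
        · rcases hchain (Finset.mem_coe.mpr hm) (Finset.mem_coe.mpr hx)
            (fun h => hxm h.symm) with h | h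
          · exact h
          · exact hmin hx h
      have hchain' : IsChain (· ≤ ·) (↑(s.erase m) : Set α) :=
        hchain.mono (Finset.coe_subset.mpr (Finset.erase_subset _ _))
      obtain ⟨l, hl, hmem⟩ := ih (s.erase m)
        (by rw [Finset.card_erase_of_mem hm]; omega) hchain'
      refine ⟨m :: l, ?_, ?_⟩
      · refine List.pairwise_cons.mpr ⟨?_, hl⟩
        intro b hb
        have hbs := (hmem b).mp hb
        exact lt_of_le_of_ne (hleast b (Finset.mem_of_mem_erase hbs))
          (Ne.symm (Finset.ne_of_mem_erase hbs))
      · intro v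
        simp only [List.mem_cons, hmem, Finset.mem_erase]
        constructor
        · rintro (rfl | ⟨_, h⟩) <;> [exact hm; exact h]
        · intro hv
          by_cases hvm : v = m
          · exact Or.inl hvm
          · exact Or.inr ⟨hvm, hv⟩

lemma wfun_map (g : α → ℝ) : ∀ l : List α, l.Pairwise (· < ·) → ∀ v,
    wfun (l.map fun u => (u, g u)) v = if v ∈ l then g v else 0 := by
  intro l
  induction l with
  | nil => intro _ v; simp [wfun_nil]
  | cons a t ihl =>
    intro hp v
    obtain ⟨ha, ht⟩ := List.pairwise_cons.mp hp
    rw [List.map_cons, wfun_cons, ihl ht v]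
    by_cases hv : a = v
    · subst hv
      have hnot : a ∉ t := fun h => absurd (ha a h) (lt_irrefl a)
      simp [hnot]
    · simp [hv, Ne.symm hv, List.mem_cons]

lemma phiF_surj [Fintype α] [Fintype (Intvl α)] (g : α → ℝ) (hg : ∀ v, 0 ≤ g v)
    (hc : IsChain (· ≤ ·) {v | g v ≠ 0}) :
    ∃ f : Intvl α → ℝ, (∀ I, 0 ≤ f I) ∧ IsChain (· ≤ ·) {I | f I ≠ 0} ∧
      ∀ v, phiF f v = g v := by
  classical
  set s : Finset α := Finset.univ.filter (g · ≠ 0) with hs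
  have hsc : IsChain (· ≤ ·) (↑s : Set α) := by
    have hcoe : (↑s : Set α) = {v | g v ≠ 0} := by ext v; simp [hs]
    rw [hcoe]; exact hc
  obtain ⟨l, hl, hmem⟩ := sorted_of_chain s.card s le_rfl hsc
  set Lp := l.map fun v => (v, g v) with hLp
  have hfst : Lp.map Prod.fst = l := by
    rw [hLp, List.map_map]
    exact List.map_id'' (fun _ => rfl) l
  have hpairL : (Lp.map Prod.fst).Pairwise (· < ·) := by rw [hfst]; exact hl
  have hnn : ∀ p ∈ Lp, 0 ≤ p.2 := by
    rw [hLp]; intro p hp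
    obtain ⟨v, _, rfl⟩ := List.mem_map.mp hp
    exact hg v
  obtain ⟨b1, b2, b3, b4⟩ := build_spec Lp.length Lp le_rfl hpairL hnn
  refine ⟨build Lp.length Lp, b1, b3, ?_⟩
  intro v
  rw [b4 v, hLp, wfun_map g l hl v]
  by_cases hv : v ∈ l
  · simp [hv]
  · have hgv : g v = 0 := by
      by_contra h
      exact hv ((hmem v).mpr (by simp [hs, h]))
    simp [hv, hgv]

end AuxProof3
section AuxProof4
open scoped Classical

lemma realiz_isCompact {V : Type*} [Fintype V] (K : Finset (Finset V)) :
    IsCompact {f : V → ℝ | (∃ s ∈ K, ∀ v, f v ≠ 0 → v ∈ s) ∧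
      (∀ v, 0 ≤ f v) ∧ ∑ v, f v = 1} := by
  set S := {f : V → ℝ | (∃ s ∈ K, ∀ v, f v ≠ 0 → v ∈ s) ∧
      (∀ v, 0 ≤ f v) ∧ ∑ v, f v = 1} with hS
  have hclosed : IsClosed S := by
    have hdecomp : S = (⋃ s ∈ K, ⋂ v, {f : V → ℝ | v ∈ s ∨ f v = 0}) ∩
        ((⋂ v, {f : V → ℝ | 0 ≤ f v}) ∩ {f : V → ℝ | ∑ v, f v = 1}) := by
      ext f
      simp only [hS, Set.mem_setOf_eq, Set.mem_inter_iff, Set.mem_iUnion, Set.mem_iInter]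
      constructor
      · rintro ⟨⟨s, hs, hsup⟩, h2, h3⟩
        refine ⟨⟨s, hs, fun v => ?_⟩, fun v => h2 v, h3⟩
        by_cases hv : f v = 0
        · exact Or.inr hv
        · exact Or.inl (hsup v hv)
      · rintro ⟨⟨s, hs, hsup⟩, h2, h3⟩
        refine ⟨⟨s, hs, fun v hv => ?_⟩, h2, h3⟩
        rcases hsup v with h | h
        · exact h
        · exact absurd h hv
    rw [hdecomp]
    apply IsClosed.inter
    · apply Set.Finite.isClosed_biUnion (Set.toFinite _)
      intro s _
      apply isClosed_iInter
      intro v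
      by_cases hv : v ∈ s
      · have : {f : V → ℝ | v ∈ s ∨ f v = 0} = Set.univ := by
          ext f; simp [hv]
        rw [this]; exact isClosed_univ
      · have : {f : V → ℝ | v ∈ s ∨ f v = 0} = (fun f : V → ℝ => f v) ⁻¹' {0} := by
          ext f; simp [hv]
        rw [this]
        exact IsClosed.preimage (continuous_apply v) isClosed_singleton
    · apply IsClosed.inter
      · apply isClosed_iInter
        intro v
        exact isClosed_le continuous_const (continuous_apply v)
      · exact isClosed_eq (by exact continuous_finset_sum _ fun v _ => continuous_apply v)
          continuous_const
  have hsubset : S ⊆ Set.pi Set.univ (fun _ : V => Set.Icc (0:ℝ) 1) := by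
    intro f hf v _
    refine ⟨hf.2.1 v, ?_⟩
    calc f v ≤ ∑ u, f u := Finset.single_le_sum (fun u _ => hf.2.1 u) (Finset.mem_univ v)
    _ = 1 := hf.2.2
  exact IsCompact.of_isClosed_subset (isCompact_univ_pi fun _ => isCompact_Icc)
    hclosed hsubset

lemma realiz_compactSpace {V : Type*} [Fintype V] (K : Finset (Finset V)) :
    CompactSpace (realiz K) :=
  isCompact_iff_compactSpace.mp (realiz_isCompact K)

lemma mem_realiz_cond {β : Type*} [PartialOrder β] [Fintype β] (f : β → ℝ) :
    (∃ s ∈ chainsIn (Set.univ : Set β), ∀ v, f v ≠ 0 → v ∈ s) ↔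
      IsChain (· ≤ ·) {v | f v ≠ 0} := by
  constructor
  · rintro ⟨s, hs, hsub⟩
    have hchain : IsChain (· ≤ ·) (↑s : Set β) := by
      simpa [chainsIn] using hs
    exact hchain.mono (fun v hv => hsub v hv)
  · intro h
    refine ⟨Finset.univ.filter (f · ≠ 0), ?_, fun v hv => by simp [hv]⟩
    simp only [chainsIn, Finset.mem_filter, Finset.mem_univ, true_and]
    refine ⟨by simp, ?_⟩
    have hcoe : (↑(Finset.univ.filter fun v => f v ≠ 0) : Set β) = {v | f v ≠ 0} := by
      ext v; simp
    rw [hcoe]; exact h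

instance realiz_t2 {V : Type*} [Fintype V] (K : Finset (Finset V)) : T2Space (realiz K) :=
  Topology.IsEmbedding.subtypeVal.t2Space

end AuxProof4
open scoped Classical in
/-- For every finite poset `P`, the order complex of `Int(P)` is
homeomorphic to the order complex of `P`. -/
theorem stmt4 (α : Type*) [PartialOrder α] [Fintype α] :
    letI := Fintype.ofFinite (Intvl α)
    Nonempty (realiz (chainsIn (Set.univ : Set (Intvl α))) ≃ₜ
      realiz (chainsIn (Set.univ : Set α))) := by
  letI : Fintype (Intvl α) := Fintype.ofFinite (Intvl α)
  show Nonempty (realiz (chainsIn (Set.univ : Set (Intvl α))) ≃ₜ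
      realiz (chainsIn (Set.univ : Set α)))
  let Φ : realiz (chainsIn (Set.univ : Set (Intvl α))) → realiz (chainsIn (Set.univ : Set α)) :=
    fun F => ⟨phiF F.1, by
      obtain ⟨h1, h2, h3⟩ := F.2
      refine ⟨(mem_realiz_cond _).mpr (endpoints_chain ((mem_realiz_cond _).mp h1)),
        fun v => phiF_nonneg h2 v, ?_⟩
      rw [sum_phiF]; exact h3⟩
  have hinj : Function.Injective Φ := by
    intro F F' h
    apply Subtype.ext
    obtain ⟨h1, h2, -⟩ := F.2
    obtain ⟨h1', h2', -⟩ := F'.2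
    exact phiF_inj (Finset.univ.filter (F.1 · ≠ 0)).card F.1 F'.1 le_rfl h2
      ((mem_realiz_cond _).mp h1) h2' ((mem_realiz_cond _).mp h1')
      (fun v => congrFun (congrArg Subtype.val h) v)
  have hsurj : Function.Surjective Φ := by
    intro G
    obtain ⟨h1, h2, h3⟩ := G.2
    obtain ⟨f, hf0, hfc, hfg⟩ := phiF_surj G.1 h2 ((mem_realiz_cond _).mp h1)
    refine ⟨⟨f, (mem_realiz_cond _).mpr hfc, hf0, ?_⟩, ?_⟩
    · rw [← sum_phiF f]
      rw [show (∑ v, phiF f v) = ∑ v, G.1 v from Finset.sum_congr rfl fun v _ => hfg v]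
      exact h3
    · apply Subtype.ext
      exact funext hfg
  haveI := realiz_compactSpace (chainsIn (Set.univ : Set (Intvl α)))
  have hcont : Continuous Φ := by
    apply Continuous.subtype_mk
    apply continuous_pi
    intro v
    exact continuous_finset_sum _ fun I _ =>
      ((continuous_apply I).comp continuous_subtype_val).mul continuous_const
  exact ⟨Continuous.homeoOfEquivCompactToT2
    (f := Equiv.ofBijective Φ ⟨hinj, hsurj⟩) hcont⟩
end

section
/- Let Δ be a simplicial complex of dimension d-1 that is Cohen-Macaulay over a field k, and let Γ be a subcomplex of Δ of dimension d-2. Then every (d-2)-cycle in the simplicial chain complex of Γ over k can be written as a finite sum of (d-2)-cycles each supported on Γ ∩ (the full simplex on a facet of Δ). More specifically: if P is a finite poset with minimum 0̂ such that P minus 0̂ is Cohen-Macaulay over k of rank d-1, and Q is obtained from P by removing 0̂ and all maximal elements, then H̃_{d-2}(Δ(Q); k) is spanned by the images of the maps H̃_{d-2}(Δ((0̂,y)); k) → H̃_{d-2}(Δ(Q); k) induced by inclusion, as y ranges over the maximal elements of P. -/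
open Finset

variable {α : Type*} [PartialOrder α]

section Homology

open Finset

variable (k : Type*) [Field k] {V : Type*} [Fintype V]

/-- An auxiliary linear order on the (finite) vertex set, used to orient simplices. -/
noncomputable def vOrd (V : Type*) [Fintype V] : LinearOrder V :=
  LinearOrder.lift' (Fintype.equivFin V) (Equiv.injective _)

/-- The position of the vertex `v` in the face `s`, with respect to the auxiliary order. -/
noncomputable def vIdx (s : Finset V) (v : V) : ℕ :=
  letI := vOrd V
  letI := Classical.decEq V
  (s.sort (· ≤ ·)).idxOf v

/-- The space of simplicial `k`-chains on all faces with `n` vertices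
(`n = 0` corresponds to the empty face, giving augmented/reduced chains). -/
abbrev ChSp (k : Type*) [Field k] (V : Type*) (n : ℕ) := {s : Finset V // s.card = n} →₀ k

/-- The simplicial boundary map, from chains on faces with `n+1` vertices to chains on
faces with `n` vertices. -/
noncomputable def bdry (n : ℕ) : ChSp k V (n + 1) →ₗ[k] ChSp k V n :=
  letI := Classical.decEq V
  Finsupp.lsum k fun s =>
    LinearMap.smulRight (LinearMap.id : k →ₗ[k] k)
      (∑ v ∈ s.1.attach,
        ((-1 : k) ^ vIdx s.1 v.1) •
          Finsupp.single ⟨s.1.erase v.1, by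
            simp [Finset.card_erase_of_mem v.2, s.2]⟩ (1 : k))

/-- The submodule of chains supported on faces of the complex `K`. -/
def suppIn (K : Finset (Finset V)) (n : ℕ) : Submodule k (ChSp k V n) where
  carrier := {c | ∀ s ∈ c.support, (s : {s : Finset V // s.card = n}).1 ∈ K}
  add_mem' := by
    classical
    intro a b ha hb s hs
    rcases Finset.mem_union.1 (Finsupp.support_add hs) with h | h
    · exact ha s h
    · exact hb s h
  zero_mem' := by simp
  smul_mem' := by
    classical
    intro t a ha s hs
    exact ha s (Finsupp.support_smul hs)

/-- The reduced cycles of the complex `K` in chain degree `m` (faces with `m` vertices,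
i.e. geometric dimension `m-1`). -/
noncomputable def zcyc (K : Finset (Finset V)) : ∀ m : ℕ, Submodule k (ChSp k V m)
  | 0 => suppIn k K 0
  | (n + 1) => suppIn k K (n + 1) ⊓ LinearMap.ker (bdry k n)

/-- The boundaries of the complex `K` in chain degree `m`. -/
noncomputable def zbnd (K : Finset (Finset V)) (m : ℕ) : Submodule k (ChSp k V m) :=
  Submodule.map (bdry k m) (suppIn k K (m + 1))

/-- Vanishing of the reduced homology `H̃_i(K; k)` (for `i : ℤ`): every reduced `i`-cycle
supported on `K` is the boundary of a chain supported on `K`. -/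
noncomputable def HVanish (K : Finset (Finset V)) (i : ℤ) : Prop :=
  if i < -1 then True else zcyc k K (i + 1).toNat ≤ zbnd k K (i + 1).toNat

/-- The dimension of a finite simplicial complex, as an integer (`-1` for the void or
empty complex). -/
def dimC (K : Finset (Finset V)) : ℤ := (↑(K.sup Finset.card) : ℤ) - 1

open scoped Classical in
/-- The link of a face `σ` in the complex `K`. -/
noncomputable def linkC (K : Finset (Finset V)) (σ : Finset V) : Finset (Finset V) :=
  Finset.univ.filter fun γ => Disjoint γ σ ∧ γ ∪ σ ∈ K

/-- A complex is closed under taking subsets of faces. -/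
def DownClosed (K : Finset (Finset V)) : Prop :=
  ∀ s t : Finset V, t ∈ K → s ⊆ t → s ∈ K

/-- `K` is Cohen-Macaulay over `k`: for every face `σ` of `K` (including the empty face),
`H̃_i(link_K σ; k) = 0` for all `i < dim link_K σ`. -/
noncomputable def IsCM (K : Finset (Finset V)) : Prop :=
  ∀ σ ∈ K, ∀ i : ℤ, i < dimC (linkC K σ) → HVanish k (linkC K σ) i

open scoped Classical in
/-- The deletion of a set `U` of vertices from `K`: all faces disjoint from `U`. -/
noncomputable def delV (K : Finset (Finset V)) (U : Finset V) : Finset (Finset V) :=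
  K.filter fun σ => Disjoint σ U

/-- `K` is doubly Cohen-Macaulay over `k`: it is Cohen-Macaulay and deleting any vertex
leaves a Cohen-Macaulay complex of the same dimension. -/
noncomputable def Is2CM (K : Finset (Finset V)) : Prop :=
  IsCM k K ∧ ∀ v : V, {v} ∈ K → IsCM k (delV K {v}) ∧ dimC (delV K {v}) = dimC K

/-- `s` is a facet (maximal face) of `K`. -/
def IsFacet (K : Finset (Finset V)) (s : Finset V) : Prop :=
  s ∈ K ∧ ∀ t ∈ K, s ⊆ t → s = t

/-- `K` is pure: all facets have `m` vertices. -/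
def PureCard (K : Finset (Finset V)) (m : ℕ) : Prop :=
  ∀ s : Finset V, IsFacet K s → s.card = m

end Homology

set_option linter.unusedSectionVars false

open Finset List

section ListLemmas
variable {β : Type*} [LinearOrder β] [DecidableEq β]

lemma mem_tail_of_ne {x a : β} {t : List β} (h : a ∈ x :: t) (hne : x ≠ a) : a ∈ t := by
  rcases List.mem_cons.1 h with h|h
  · exact absurd h.symm hne
  · exact h

lemma idx_erase_of_lt : ∀ (l : List β), l.Pairwise (· < ·) → ∀ a b, a ∈ l → b ∈ l → a < b →
    (l.erase b).idxOf a = l.idxOf a := by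
  intro l hl a b ha hb hab
  induction l with
  | nil => simp at ha
  | cons x t ih =>
    rcases eq_or_ne x a with rfl | hxa
    · have hbx : ¬ (x == b) := by simp; rintro rfl; exact lt_irrefl _ hab
      rw [List.erase_cons_tail hbx, List.idxOf_cons_self, List.idxOf_cons_self]
    · have hat : a ∈ t := mem_tail_of_ne ha hxa
      have hxb : x ≠ b := by
        rintro rfl
        exact absurd (List.rel_of_pairwise_cons hl hat) (lt_asymm hab)
      have hbt : b ∈ t := mem_tail_of_ne hb hxb
      rw [List.erase_cons_tail (a := b) (b := x) (by simp [hxb, Ne.symm hxb]), List.idxOf_cons_ne _ hxa,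
        List.idxOf_cons_ne _ hxa, ih hl.of_cons hat hbt]

lemma idx_erase_succ : ∀ (l : List β), l.Pairwise (· < ·) → ∀ a b, a ∈ l → b ∈ l → a < b →
    (l.erase a).idxOf b + 1 = l.idxOf b := by
  intro l hl a b ha hb hab
  induction l with
  | nil => simp at ha
  | cons x t ih =>
    rcases eq_or_ne x a with rfl | hxa
    · rw [List.erase_cons_head, List.idxOf_cons_ne _ (by rintro rfl; exact lt_irrefl _ hab)]
    · have hat : a ∈ t := mem_tail_of_ne ha hxa
      have hxalt : x < a := List.rel_of_pairwise_cons hl hat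
      have hxb : x ≠ b := by rintro rfl; exact lt_asymm hab hxalt
      have hbt : b ∈ t := mem_tail_of_ne hb hxb
      rw [List.erase_cons_tail (a := a) (b := x) (by simp [hxa, Ne.symm hxa]), List.idxOf_cons_ne _ hxb,
        List.idxOf_cons_ne _ hxb, ← ih hl.of_cons hat hbt]

lemma sort_erase (s : Finset β) (v : β) :
    (s.erase v).sort (· ≤ ·) = ((s.sort (· ≤ ·)).erase v) := by
  refine (fun (p : (s.erase v).sort (· ≤ ·) ~ (s.sort (· ≤ ·)).erase v) s1 s2 =>
    List.Perm.eq_of_pairwise' (r := (· ≤ ·)) s1 s2 p) ?_ ?_ ?_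
  · have h1 : (s.erase v).sort (· ≤ ·) ~ (s.erase v).toList := Finset.sort_perm_toList _ _
    have h2 : (s.sort (· ≤ ·)).erase v ~ s.toList.erase v := (Finset.sort_perm_toList s _).erase v
    refine h1.trans (Perm.trans ?_ h2.symm)
    rw [← Multiset.coe_eq_coe, ← Multiset.coe_erase]
    show ((s.erase v).val.toList : Multiset β) = (((s.val.toList : List β) : Multiset β)).erase v
    rw [Multiset.coe_toList, Multiset.coe_toList]
    exact Finset.erase_val s v
  · exact Finset.pairwise_sort _ (· ≤ ·)
  · exact (Finset.pairwise_sort s (· ≤ ·)).erase _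

end ListLemmas

section Bdry
variable (k : Type*) [Field k] {V : Type*} [Fintype V]

/-- Total version of the single-face generator. -/
noncomputable def dfc (n : ℕ) (t : Finset V) (v : V) : ChSp k V n :=
  letI := Classical.decEq V
  if h : (t.erase v).card = n then Finsupp.single ⟨t.erase v, h⟩ 1 else 0

variable {k}

lemma vIdx_erase_of_lt [inst : DecidableEq V] (s : Finset V) {v w : V} (hv : v ∈ s) (hw : w ∈ s)
    (h : (vOrd V).lt v w) : vIdx (s.erase w) v = vIdx s v := by
  rw [Subsingleton.elim inst (Classical.decEq V)]
  letI := vOrd V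
  letI := Classical.decEq V
  show ((s.erase w).sort (· ≤ ·)).idxOf v = (s.sort (· ≤ ·)).idxOf v
  rw [sort_erase]
  exact idx_erase_of_lt _ (Finset.sortedLT_sort s).pairwise v w
    ((Finset.mem_sort _).2 hv) ((Finset.mem_sort _).2 hw) h

lemma vIdx_erase_succ [inst : DecidableEq V] (s : Finset V) {v w : V} (hv : v ∈ s) (hw : w ∈ s)
    (h : (vOrd V).lt v w) : vIdx (s.erase v) w + 1 = vIdx s w := by
  rw [Subsingleton.elim inst (Classical.decEq V)]
  letI := vOrd V
  letI := Classical.decEq V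
  show ((s.erase v).sort (· ≤ ·)).idxOf w + 1 = (s.sort (· ≤ ·)).idxOf w
  rw [sort_erase]
  exact idx_erase_succ _ (Finset.sortedLT_sort s).pairwise v w
    ((Finset.mem_sort _).2 hv) ((Finset.mem_sort _).2 hw) h

lemma signs_cancel [DecidableEq V] (s : Finset V) {v w : V} (hv : v ∈ s) (hw : w ∈ s)
    (hne : v ≠ w) :
    ((-1:k) ^ vIdx s v * (-1) ^ vIdx (s.erase v) w)
      + ((-1) ^ vIdx s w * (-1) ^ vIdx (s.erase w) v) = 0 := by
  letI := vOrd V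
  rcases lt_trichotomy v w with h | h | h
  · rw [vIdx_erase_of_lt s hv hw h, ← vIdx_erase_succ s hv hw h, pow_succ]
    ring
  · exact absurd h hne
  · rw [vIdx_erase_of_lt s hw hv h, ← vIdx_erase_succ s hw hv h, pow_succ]
    ring

end Bdry

section Bdry2
variable (k : Type*) [Field k] {V : Type*} [Fintype V]

lemma bdry_single_eq (n : ℕ) (s : Finset V) (h : s.card = n + 1) (b : k) :
    bdry k n (Finsupp.single ⟨s, h⟩ b) = b • ∑ v ∈ s, ((-1:k) ^ vIdx s v) • dfc k n s v := by
  classical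
  rw [bdry, Finsupp.lsum_single, LinearMap.smulRight_apply, LinearMap.id_apply]
  congr 1
  rw [← Finset.sum_attach s (fun v => ((-1:k) ^ vIdx s v) • dfc k n s v)]
  refine Finset.sum_congr rfl fun v _ => ?_
  rw [dfc, dif_pos]

end Bdry2

section Bdry3
variable (k : Type*) [Field k] {V : Type*} [Fintype V]

lemma bdry_dfc [inst : DecidableEq V] (n : ℕ) (s : Finset V) (hs : s.card = n + 2) (v : V)
    (hv : v ∈ s) :
    bdry k n (dfc k (n+1) s v) =
      ∑ w ∈ s.erase v, ((-1:k) ^ vIdx (s.erase v) w) • dfc k n (s.erase v) w := by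
  rw [Subsingleton.elim inst (Classical.decEq V)]
  letI := Classical.decEq V
  have hc : (s.erase v).card = n + 1 := by rw [Finset.card_erase_of_mem hv, hs]; omega
  rw [dfc, dif_pos hc, bdry_single_eq k n (s.erase v) hc, one_smul]

lemma bdry_bdry (n : ℕ) (c : ChSp k V (n + 2)) : bdry k n (bdry k (n + 1) c) = 0 := by
  letI := Classical.decEq V
  induction c using Finsupp.induction_linear with
  | zero => simp
  | add f g hf hg => rw [map_add, map_add, hf, hg, add_zero]
  | single t b =>
    obtain ⟨s, hs⟩ := t
    rw [bdry_single_eq k (n + 1) s hs b, map_smul, map_sum]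
    set F : V × V → ChSp k V n := fun p =>
      (((-1:k) ^ vIdx s p.1) * ((-1:k) ^ vIdx (s.erase p.1) p.2)) • dfc k n (s.erase p.1) p.2
      with hF
    have h1 : ∀ v ∈ s, bdry k n (((-1:k) ^ vIdx s v) • dfc k (n+1) s v)
        = ∑ w ∈ s.erase v, F (v, w) := by
      intro v hv
      rw [map_smul, bdry_dfc k n s hs v hv, Finset.smul_sum]
      exact Finset.sum_congr rfl fun w _ => smul_smul _ _ _
    rw [Finset.sum_congr rfl h1]
    set T : Finset (V × V) := (s ×ˢ s).filter (fun p => p.1 ≠ p.2) with hT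
    have memT : ∀ p : V × V, p ∈ T → p.1 ∈ s ∧ p.2 ∈ s ∧ p.1 ≠ p.2 := by
      intro p hp
      obtain ⟨h1, h2⟩ := Finset.mem_filter.1 hp
      obtain ⟨h3, h4⟩ := Finset.mem_product.1 h1
      exact ⟨h3, h4, h2⟩
    have h3 : ∑ p ∈ T, F p = 0 := by
      refine Finset.sum_involution (fun p _ => p.swap) ?_ ?_ ?_ ?_
      · intro p hp
        obtain ⟨hp1, hp2, hp3⟩ := memT p hp
        have e1 : ((s.erase p.1).erase p.2).card = n := by
          rw [Finset.card_erase_of_mem (Finset.mem_erase.2 ⟨Ne.symm hp3, hp2⟩),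
            Finset.card_erase_of_mem hp1, hs]; omega
        have e2 : ((s.erase p.2).erase p.1).card = n := by
          rw [Finset.card_erase_of_mem (Finset.mem_erase.2 ⟨hp3, hp1⟩),
            Finset.card_erase_of_mem hp2, hs]; omega
        have hd : dfc k n (s.erase p.1) p.2 = dfc k n (s.erase p.2) p.1 := by
          rw [dfc, dfc, dif_pos e1, dif_pos e2]
          congr 1
          exact Subtype.ext Finset.erase_right_comm
        show F p + F (p.2, p.1) = 0
        simp only [hF]
        rw [hd, ← add_smul, signs_cancel s hp1 hp2 hp3, zero_smul]
      · intro p hp _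
        obtain ⟨_, _, hp3⟩ := memT p hp
        intro hc
        exact hp3 (Prod.ext_iff.1 hc).2
      · intro p hp
        obtain ⟨hp1, hp2, hp3⟩ := memT p hp
        exact Finset.mem_filter.2 ⟨Finset.mem_product.2 ⟨hp2, hp1⟩, Ne.symm hp3⟩
      · intro p hp
        rfl
    have h2 : ∑ v ∈ s, ∑ w ∈ s.erase v, F (v, w) = ∑ p ∈ T, F p := by
      rw [hT, Finset.sum_filter, Finset.sum_product]
      refine Finset.sum_congr rfl fun v _ => ?_
      rw [← Finset.filter_ne s v, Finset.sum_filter]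
    rw [h2, h3, smul_zero]

end Bdry3

section Chains
variable {α : Type*} [PartialOrder α]

lemma chain_exists_top (c : Finset α) (hch : IsChain (· ≤ ·) (c : Set α)) (hne : c.Nonempty) :
    ∃ m ∈ c, ∀ x ∈ c, x ≤ m := by
  classical
  induction c using Finset.induction_on with
  | empty => exact absurd hne (by simp)
  | @insert a s ha ih =>
    rcases s.eq_empty_or_nonempty with rfl | hsne
    · exact ⟨a, by simp, by simp⟩
    · obtain ⟨m, hm, hmax⟩ := ih (hch.mono (by simp [Finset.coe_insert, Set.subset_insert])) hsne
      rcases (hch.total (by simp) (by simp [hm]) : a ≤ m ∨ m ≤ a) with h | h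
      · exact ⟨m, by simp [hm], fun x hx => by
          rcases Finset.mem_insert.1 hx with rfl | hx
          · exact h
          · exact hmax x hx⟩
      · exact ⟨a, by simp, fun x hx => by
          rcases Finset.mem_insert.1 hx with rfl | hx
          · exact le_rfl
          · exact (hmax x hx).trans h⟩

lemma exists_maxchain_extending [Fintype α] (S : Set α) (c : Finset α) (hc : ↑c ⊆ S)
    (hch : IsChain (· ≤ ·) (c : Set α)) : ∃ m : Finset α, c ⊆ m ∧ IsMaxChainIn S m := by
  classical
  let T := Finset.univ.filter (fun m : Finset α => ↑m ⊆ S ∧ _root_.IsChain (· ≤ ·) (m : Set α) ∧ c ⊆ m)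
  have hcT : c ∈ T := by simp [T, hc, hch]
  obtain ⟨m, hmT, hmax⟩ := T.exists_max_image Finset.card ⟨c, hcT⟩
  simp only [T, Finset.mem_filter, Finset.mem_univ, true_and] at hmT
  refine ⟨m, hmT.2.2, hmT.1, hmT.2.1, fun c' hc' hch' hsub => ?_⟩
  have hc'T : c' ∈ T := by
    simp only [T, Finset.mem_filter, Finset.mem_univ, true_and]
    exact ⟨hc', hch', hmT.2.2.trans hsub⟩
  exact Finset.eq_of_subset_of_card_le hsub (hmax c' hc'T)

variable [Fintype α] {S : Set α} {d : ℕ}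

/-- Every chain in a graded subposet has at most `d + 1` elements. -/
lemma chain_card_le_s5 (hgr : GradedRank S d) (c : Finset α) (hc : ↑c ⊆ S)
    (hch : IsChain (· ≤ ·) (c : Set α)) : c.card ≤ d + 1 := by
  obtain ⟨m, hsub, hm⟩ := exists_maxchain_extending S c hc hch
  calc c.card ≤ m.card := Finset.card_le_card hsub
  _ = d + 1 := hgr m hm

lemma chain_maximal_of_card (hgr : GradedRank S d) (c : Finset α) (hc : ↑c ⊆ S)
    (hch : IsChain (· ≤ ·) (c : Set α)) (hcard : c.card = d + 1) : IsMaxChainIn S c := by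
  refine ⟨hc, hch, fun c' hc' hch' hsub => ?_⟩
  exact Finset.eq_of_subset_of_card_le hsub (by rw [hcard]; exact chain_card_le_s5 hgr c' hc' hch')

lemma exists_chain_card (hgr : GradedRank S d) : ∃ c : Finset α, ↑c ⊆ S ∧
    IsChain (· ≤ ·) (c : Set α) ∧ c.card = d + 1 := by
  obtain ⟨m, _, hm⟩ := exists_maxchain_extending S ∅ (by simp) (by simp)
  exact ⟨m, hm.1, hm.2.1, hgr m hm⟩

end Chains

section SupportLemma
variable (k : Type*) [Field k] {V : Type*} [Fintype V]

lemma support_bdry_subset (n : ℕ) (f : ChSp k V (n + 1)) :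
    ∀ s ∈ (bdry k n f).support, ∃ t ∈ f.support, s.1 ⊆ t.1 := by
  classical
  intro s hs
  rw [bdry] at hs
  rw [Finsupp.lsum_apply] at hs
  have h1 := Finsupp.support_sum hs
  obtain ⟨t, ht, hst⟩ := Finset.mem_biUnion.1 h1
  refine ⟨t, ht, ?_⟩
  rw [LinearMap.smulRight_apply, LinearMap.id_apply] at hst
  have h2 := Finsupp.support_smul hst
  have h3 := Finsupp.support_finset_sum h2
  obtain ⟨v, hv, hsv⟩ := Finset.mem_biUnion.1 h3
  have h4 := Finsupp.support_smul hsv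
  have h5 := Finsupp.support_single_subset h4
  rw [Finset.mem_singleton] at h5
  subst h5
  exact Finset.erase_subset _ _

end SupportLemma

open scoped Classical in
/-- If `P ∖ {0̂}` is Cohen-Macaulay over `k` of rank `d-1` and `Q` is `P`
minus `0̂` and all maximal elements, then `H̃_{d-2}(Δ(Q); k)` is spanned by the images of
the maps `H̃_{d-2}(Δ((0̂,y)); k) → H̃_{d-2}(Δ(Q); k)` induced by inclusion, for `y` ranging
over the maximal elements of `P`: every supported `(d-2)`-cycle lies in the sum of the
cycle spaces of the subcomplexes `Δ((0̂,y))` together with the boundaries. -/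
theorem stmt5 (k : Type*) [Field k] (P : Type*) [PartialOrder P] [Fintype P] [OrderBot P]
    (d : ℕ) (hd : 2 ≤ d)
    (hgr : GradedRank {x : P | x ≠ ⊥} (d - 1))
    (hCM : IsCM k (chainsIn {x : P | x ≠ ⊥})) :
    zcyc k (chainsIn {x : P | x ≠ ⊥ ∧ ¬IsMax x}) (d - 2 + 1) ≤
      (⨆ y ∈ Finset.univ.filter fun y : P => IsMax y,
        zcyc k (chainsIn (Set.Ioo (⊥ : P) y)) (d - 2 + 1)) ⊔
      zbnd k (chainsIn {x : P | x ≠ ⊥ ∧ ¬IsMax x}) (d - 2 + 1) := by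
  obtain ⟨n, rfl⟩ : ∃ n, d = n + 2 := ⟨d - 2, by omega⟩
  set S : Set P := {x : P | x ≠ ⊥} with hS
  set Q : Set P := {x : P | x ≠ ⊥ ∧ ¬IsMax x} with hQ
  have hgr' : GradedRank S (n + 1) := hgr
  set KS : Finset (Finset P) := chainsIn S with hKS
  set KQ : Finset (Finset P) := chainsIn Q with hKQ
  have memKS : ∀ s : Finset P, s ∈ KS ↔ ↑s ⊆ S ∧ IsChain (· ≤ ·) (s : Set P) := by
    intro s; rw [hKS, chainsIn, Finset.mem_filter]; simp
  have memKQ : ∀ s : Finset P, s ∈ KQ ↔ ↑s ⊆ Q ∧ IsChain (· ≤ ·) (s : Set P) := by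
    intro s; rw [hKQ, chainsIn, Finset.mem_filter]; simp
  have hQS : ∀ s : Finset P, s ∈ KQ → s ∈ KS := by
    intro s hs
    rw [memKQ] at hs; rw [memKS]
    exact ⟨fun x hx => (hs.1 hx).1, hs.2⟩
  -- top of a maximal-size chain
  have top_spec : ∀ s : Finset P, s ∈ KS → s.card = n + 2 →
      ∃ m ∈ s, IsMax m ∧ (∀ x ∈ s, x ≤ m) ∧ (∀ y ∈ s, IsMax y → y = m) := by
    intro s hsKS hcard
    rw [memKS] at hsKS
    obtain ⟨hsub, hch⟩ := hsKS
    obtain ⟨m, hm, hmax⟩ := chain_exists_top s hch (by rw [← Finset.card_pos, hcard]; omega)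
    have hMm : IsMax m := by
      intro z hz
      by_contra hzle
      have hmz : m ≠ z := fun h => hzle (h ▸ le_rfl)
      have hzs : z ∉ s := fun h => hzle (hmax z h)
      have hzS : z ∈ S := by
        rw [hS]
        intro hzb
        exact (hsub hm) (by rw [hS] at *; simp_all [le_bot_iff.1 (hzb ▸ hz)])
      have hchz : IsChain (· ≤ ·) ((insert z s : Finset P) : Set P) := by
        rw [Finset.coe_insert]
        exact hch.insert (fun x hx _ => Or.inr ((hmax x hx).trans hz))
      have hsubz : ((insert z s : Finset P) : Set P) ⊆ S := by
        rw [Finset.coe_insert]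
        exact Set.insert_subset hzS hsub
      have hle := chain_card_le_s5 hgr' _ hsubz hchz
      rw [Finset.card_insert_of_notMem hzs, hcard] at hle
      omega
    refine ⟨m, hm, hMm, hmax, fun y hy hMy => _root_.le_antisymm (hmax y hy) (hMy (hmax y hy))⟩
  -- H_{n}(K_S) vanishing
  have hKSempty : ∅ ∈ KS := by rw [memKS]; simp [_root_.IsChain]
  have hlink : linkC KS ∅ = KS := by
    ext γ
    rw [linkC, Finset.mem_filter]
    simp
  have hsup : KS.sup Finset.card = n + 2 := by
    apply _root_.le_antisymm
    · refine Finset.sup_le fun s hs => ?_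
      rw [memKS] at hs
      exact chain_card_le_s5 hgr' s hs.1 hs.2
    · obtain ⟨c, hc1, hc2, hc3⟩ := exists_chain_card hgr'
      have : c ∈ KS := (memKS c).2 ⟨hc1, hc2⟩
      calc n + 2 = c.card := hc3.symm
      _ ≤ KS.sup Finset.card := Finset.le_sup this
  have hvan : zcyc k KS (n + 1) ≤ zbnd k KS (n + 1) := by
    have h1 := hCM ∅ hKSempty (n : ℤ) (by
      rw [hlink, dimC, hsup]
      push_cast
      omega)
    rw [hlink, HVanish, if_neg (by omega)] at h1
    have h2 : ((n : ℤ) + 1).toNat = n + 1 := by omega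
    rwa [h2] at h1
  -- main argument
  intro z hz
  obtain ⟨hzsupp, hzker⟩ := Submodule.mem_inf.1 hz
  have hzker' : bdry k n z = 0 := hzker
  have hzsupp' : ∀ s ∈ z.support, (s : {s : Finset P // s.card = n + 1}).1 ∈ KQ := hzsupp
  have hzKS : z ∈ zcyc k KS (n + 1) :=
    Submodule.mem_inf.2 ⟨fun s hs => hQS _ (hzsupp' s hs), hzker⟩
  obtain ⟨c, hcsupp, hcz⟩ := Submodule.mem_map.1 (hvan hzKS)
  have hcsupp' : ∀ t ∈ c.support, (t : {s : Finset P // s.card = n + 2}).1 ∈ KS := hcsupp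
  set M : Finset P := Finset.univ.filter (fun y : P => IsMax y) with hM
  set cy : P → ChSp k P (n + 2) := fun y => Finsupp.filter (fun s => y ∈ s.1) c with hcy
  -- decomposition of c
  have cdecomp : c = ∑ y ∈ M, cy y := by
    ext s
    rw [Finsupp.finset_sum_apply]
    simp only [hcy, Finsupp.filter_apply]
    by_cases hcs : c s = 0
    · rw [hcs]
      simp
    · have hsS : s.1 ∈ KS := hcsupp' s (Finsupp.mem_support_iff.2 hcs)
      obtain ⟨m, hm, hMm, hmax, huniq⟩ := top_spec s.1 hsS s.2
      rw [Finset.sum_eq_single_of_mem m (by rw [hM]; simp [hMm])]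
      · rw [if_pos hm]
      · intro y hy hne
        rw [hM, Finset.mem_filter] at hy
        refine if_neg (fun hys => hne (huniq y hys hy.2))
  -- supports of boundaries of pieces
  have key : ∀ y ∈ M, bdry k (n + 1) (cy y) ∈ zcyc k (chainsIn (Set.Ioo (⊥ : P) y)) (n + 1) := by
    intro y hyM
    rw [hM, Finset.mem_filter] at hyM
    have hMy : IsMax y := hyM.2
    -- structure of support chains
    have tfact : ∀ y' : P, IsMax y' → ∀ t ∈ (cy y').support,
        (t : {s : Finset P // s.card = n + 2}).1 ∈ KS ∧ y' ∈ (t : {s : Finset P // s.card = n + 2}).1 ∧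
          ∀ x ∈ (t : {s : Finset P // s.card = n + 2}).1, x ≤ y' := by
      intro y' hMy' t ht
      rw [hcy] at ht
      rw [Finsupp.support_filter, Finset.mem_filter] at ht
      have htKS := hcsupp' t ht.1
      obtain ⟨m, hm, hMm, hmax, huniq⟩ := top_spec t.1 htKS t.2
      have : y' = m := huniq y' ht.2 hMy'
      subst this
      exact ⟨htKS, ht.2, hmax⟩
    refine Submodule.mem_inf.2 ⟨?_, ?_⟩
    · -- support condition
      intro s hs
      obtain ⟨t, ht, hst⟩ := support_bdry_subset k (n + 1) (cy y) s hs
      obtain ⟨htKS, hyt, htop⟩ := tfact y hMy t ht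
      by_cases hys : y ∈ (s : {s : Finset P // s.card = n + 1}).1
      · -- contradiction: the coefficient at s is zero
        exfalso
        have hone : ∀ y' ∈ M, y' ≠ y → (bdry k (n + 1) (cy y')) s = 0 := by
          intro y' hy'M hne
          rw [hM, Finset.mem_filter] at hy'M
          by_contra hne0
          obtain ⟨t', ht', hst'⟩ :=
            support_bdry_subset k (n + 1) (cy y') s (Finsupp.mem_support_iff.2 hne0)
          obtain ⟨ht'KS, hy't', ht'top⟩ := tfact y' hy'M.2 t' ht'
          exact hne (_root_.le_antisymm (hMy (ht'top y (hst' hys))) (ht'top y (hst' hys)))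
        have hzs : z s = 0 := by
          by_contra hne0
          have := hzsupp' s (Finsupp.mem_support_iff.2 hne0)
          rw [memKQ] at this
          exact ((this.1 hys).2) hMy
        have : z s = ∑ y' ∈ M, (bdry k (n + 1) (cy y')) s := by
          rw [← hcz, cdecomp, map_sum, Finsupp.finset_sum_apply]
        rw [Finset.sum_eq_single_of_mem y (by rw [hM]; simp [hMy]) hone] at this
        rw [Finsupp.mem_support_iff] at hs
        exact hs (by rw [← this, hzs])
      · -- s is a chain in the open interval
        have hsKS : (s : {s : Finset P // s.card = n + 1}).1 ∈ KS := by
          rw [memKS] at htKS ⊢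
          exact ⟨fun x hx => htKS.1 (hst hx), htKS.2.mono (by exact_mod_cast hst)⟩
        rw [memKS] at hsKS
        rw [chainsIn, Finset.mem_filter]
        refine ⟨Finset.mem_univ _, fun x hx => ?_, hsKS.2⟩
        have hxt : x ∈ t.1 := hst hx
        have hxy : x < y := lt_of_le_of_ne (htop x hxt) (fun h => hys (h ▸ hx))
        have hxb : x ≠ ⊥ := hsKS.1 hx
        exact Set.mem_Ioo.2 ⟨bot_lt_iff_ne_bot.2 hxb, hxy⟩
    · -- cycle condition
      exact LinearMap.mem_ker.2 (bdry_bdry k n (cy y))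
  -- conclude
  apply Submodule.mem_sup_left
  rw [← hcz, cdecomp, map_sum]
  refine Submodule.sum_mem _ fun y hy => ?_
  exact Submodule.mem_iSup_of_mem y (Submodule.mem_iSup_of_mem hy (key y hy))
end

section
/- Every Eulerian lattice of rank d has at least d atoms. More generally, every finite graded lattice of rank d whose Möbius function is nowhere zero has at least d atoms. -/
open Finset

variable {α : Type*} [PartialOrder α]

section Aux
open scoped Classical

lemma mu_sum_filter_left {α : Type*} [PartialOrder α] [Fintype α] [DecidableEq α]
    [LocallyFiniteOrder α] (x y : α) :
    ∑ z ∈ univ.filter (fun z => x ≤ z ∧ z ≤ y), IncidenceAlgebra.mu ℤ z y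
      = if x = y then 1 else 0 := by
  rw [show (univ.filter fun z => x ≤ z ∧ z ≤ y) = Finset.Icc x y from by ext z; simp]
  exact IncidenceAlgebra.sum_Icc_mu_left x y

lemma mu_sum_filter_right {α : Type*} [PartialOrder α] [Fintype α] [DecidableEq α]
    [LocallyFiniteOrder α] (x y : α) :
    ∑ z ∈ univ.filter (fun z => x ≤ z ∧ z ≤ y), IncidenceAlgebra.mu ℤ x z
      = if x = y then 1 else 0 := by
  rw [show (univ.filter fun z => x ≤ z ∧ z ≤ y) = Finset.Icc x y from by ext z; simp]
  exact IncidenceAlgebra.sum_Icc_mu_right x y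

lemma pmu_sum_left {α : Type*} [PartialOrder α] [Fintype α] (x y : α) :
    ∑ z ∈ univ.filter (fun z => x ≤ z ∧ z ≤ y), pmu α z y = if x = y then 1 else 0 := by
  letI := Fintype.ofFinite α
  letI := Classical.decEq α
  letI : @DecidableRel α α (· ≤ ·) := Classical.decRel _
  letI : @DecidableRel α α (· < ·) := Classical.decRel _
  letI := Fintype.toLocallyFiniteOrder (α := α)
  unfold pmu
  convert mu_sum_filter_left x y using 2; ext z; simp

lemma pmu_sum_right {α : Type*} [PartialOrder α] [Fintype α] (x y : α) :
    ∑ z ∈ univ.filter (fun z => x ≤ z ∧ z ≤ y), pmu α x z = if x = y then 1 else 0 := by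
  letI := Fintype.ofFinite α
  letI := Classical.decEq α
  letI : @DecidableRel α α (· ≤ ·) := Classical.decRel _
  letI : @DecidableRel α α (· < ·) := Classical.decRel _
  letI := Fintype.toLocallyFiniteOrder (α := α)
  unfold pmu
  convert mu_sum_filter_right x y using 2; ext z; simp

lemma weisner_dual {α : Type*} [Lattice α] [OrderBot α] [Fintype α]
    (f : α → α → ℤ)
    (hl : ∀ x y : α, ∑ z ∈ univ.filter (fun z => x ≤ z ∧ z ≤ y), f z y = if x = y then 1 else 0)
    (hr : ∀ x y : α, ∑ z ∈ univ.filter (fun z => x ≤ z ∧ z ≤ y), f x z = if x = y then 1 else 0)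
    (t a : α) (hat : a ≤ t) (hne : a ≠ t) :
    ∑ z ∈ univ.filter (fun z => z ≤ t ∧ z ⊓ a = ⊥), f z t = 0 := by
  have key : ∀ z : α, (if z ⊓ a = ⊥ then (1 : ℤ) else 0)
      = ∑ y ∈ univ, if y ≤ z ∧ y ≤ a then f ⊥ y else 0 := by
    intro z
    have h := hr ⊥ (z ⊓ a)
    rw [sum_filter] at h
    rw [show (∑ y ∈ univ, if y ≤ z ∧ y ≤ a then f ⊥ y else 0)
        = ∑ y ∈ univ, if ⊥ ≤ y ∧ y ≤ z ⊓ a then f ⊥ y else 0 from by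
      apply sum_congr rfl; intro y _; simp [le_inf_iff]]
    rw [h]
    simp [eq_comm]
  calc ∑ z ∈ univ.filter (fun z => z ≤ t ∧ z ⊓ a = ⊥), f z t
      = ∑ z ∈ univ, if z ≤ t then (if z ⊓ a = ⊥ then (1:ℤ) else 0) * f z t else 0 := by
        rw [sum_filter]
        apply sum_congr rfl; intro z _
        by_cases h1 : z ≤ t <;> by_cases h2 : z ⊓ a = ⊥ <;> simp [h1, h2]
    _ = ∑ z ∈ univ, ∑ y ∈ univ, (if y ≤ z ∧ y ≤ a ∧ z ≤ t then f ⊥ y * f z t else 0) := by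
        apply sum_congr rfl; intro z _
        by_cases h1 : z ≤ t
        · rw [if_pos h1, key z, sum_mul]
          apply sum_congr rfl; intro y _
          by_cases h2 : y ≤ z ∧ y ≤ a <;> simp [h2, h1, and_assoc]
        · simp [h1]
    _ = ∑ y ∈ univ, ∑ z ∈ univ, (if y ≤ z ∧ y ≤ a ∧ z ≤ t then f ⊥ y * f z t else 0) :=
        Finset.sum_comm
    _ = ∑ y ∈ univ, (if y ≤ a then f ⊥ y * (if y = t then 1 else 0) else 0) := by
        apply sum_congr rfl; intro y _
        by_cases h2 : y ≤ a
        · rw [if_pos h2]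
          have h := hl y t
          rw [sum_filter] at h
          rw [← h, mul_sum]
          apply sum_congr rfl; intro z _
          by_cases h3 : y ≤ z ∧ z ≤ t
          · simp [h3, h2]
          · rw [if_neg h3, if_neg (by tauto), mul_zero]
        · simp [h2]
    _ = 0 := by
        apply sum_eq_zero; intro y _
        by_cases h2 : y ≤ a
        · rw [if_pos h2, if_neg, mul_zero]
          rintro rfl
          exact hne (le_antisymm hat h2)
        · rw [if_neg h2]

lemma singleton_maxchain (x : α) : IsMaxChainIn (Set.Icc x x) ({x} : Finset α) := by
  refine ⟨by simp, by simp, fun c' hs hc hsub => ?_⟩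
  apply Finset.Subset.antisymm hsub
  intro z hz
  have := hs hz
  rw [Set.Icc_self, Set.mem_singleton_iff] at this
  simp [this]

lemma bot_mem_ne [OrderBot α] {t : α} {r : ℕ} (h : IntervalGraded ⊥ t (r + 1)) : t ≠ ⊥ := by
  rintro rfl
  have := h {⊥} (singleton_maxchain ⊥)
  simp at this

lemma cover_maxchain [OrderBot α] {c t : α} (hct : c ⋖ t) {m : Finset α}
    (hm : IsMaxChainIn (Set.Icc ⊥ c) m) :
    IsMaxChainIn (Set.Icc ⊥ t) (insert t m) ∧ t ∉ m := by
  obtain ⟨hsub, hch, hmax⟩ := hm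
  have hle : ∀ x ∈ m, x ≤ c := fun x hx => (hsub hx).2
  have hcm : c ∈ m := by
    have h1 : (↑(insert c m) : Set α) ⊆ Set.Icc ⊥ c := by
      rw [Finset.coe_insert]
      rintro z (rfl | hz)
      · exact ⟨bot_le, le_rfl⟩
      · exact hsub hz
    have h2 : IsChain (· ≤ ·) (↑(insert c m) : Set α) := by
      rw [Finset.coe_insert]
      exact hch.insert fun b hb _ => Or.inr (hle b hb)
    have := hmax (insert c m) h1 h2 (Finset.subset_insert _ _)
    rw [this]; exact Finset.mem_insert_self _ _
  have htm : t ∉ m := fun h => hct.lt.not_ge (hle t h)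
  refine ⟨⟨?_, ?_, ?_⟩, htm⟩
  · rw [Finset.coe_insert]
    rintro z (rfl | hz)
    · exact ⟨bot_le, le_rfl⟩
    · exact ⟨bot_le, ((hsub hz).2).trans hct.lt.le⟩
  · rw [Finset.coe_insert]
    exact hch.insert fun b hb _ => Or.inr ((hle b hb).trans hct.lt.le)
  · intro c' h1 h2 h3
    refine Finset.Subset.antisymm h3 fun z hz => ?_
    have hcc' : c ∈ c' := h3 (Finset.mem_insert_of_mem hcm)
    rcases eq_or_ne z t with rfl | hzt
    · exact Finset.mem_insert_self _ _
    rcases eq_or_ne z c with rfl | hzc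
    · exact Finset.mem_insert_of_mem hcm
    have hcomp := h2.total (Finset.mem_coe.mpr hz) (Finset.mem_coe.mpr hcc')
    rcases hcomp with hzc' | hcz
    · -- z ≤ c : use maximality of m on c'.filter (· ≤ c)
      have hmm : m = c'.filter (· ≤ c) := by
        apply hmax
        · intro w hw
          simp only [Finset.coe_filter, Set.mem_setOf_eq] at hw
          exact ⟨(h1 hw.1).1, hw.2⟩
        · exact h2.mono (by intro w hw; exact Finset.mem_coe.mpr (Finset.filter_subset _ _ hw))
        · intro w hw
          exact Finset.mem_filter.mpr ⟨h3 (Finset.mem_insert_of_mem hw), hle w hw⟩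
      apply Finset.mem_insert_of_mem
      rw [hmm]
      exact Finset.mem_filter.mpr ⟨hz, hzc'⟩
    · -- c ≤ z, z ≠ c, so c < z ≤ t, cover forces z = t
      have hzt' : z ≤ t := (h1 hz).2
      have : z = t := le_antisymm hzt' (by
        by_contra h
        exact hct.2 (lt_of_le_of_ne hcz (Ne.symm hzc)) (lt_of_le_of_ne hzt' hzt))
      exact absurd this hzt

lemma interval_graded_of_cover [OrderBot α] {c t : α} (hct : c ⋖ t) {r : ℕ}
    (h : IntervalGraded ⊥ t (r + 1)) : IntervalGraded ⊥ c r := by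
  intro m hm
  obtain ⟨hmc, htm⟩ := cover_maxchain hct hm
  have := h _ hmc
  rw [Finset.card_insert_of_notMem htm] at this
  omega

lemma atoms_count {α : Type*} [Lattice α] [Fintype α] [BoundedOrder α]
    (hmu : ∀ x y : α, x ≤ y → pmu α x y ≠ 0) :
    ∀ (r : ℕ) (t : α), IntervalGraded ⊥ t r →
      r ≤ (univ.filter fun a => IsAtom a ∧ a ≤ t).card := by
  intro r
  induction r with
  | zero => intro t _; exact Nat.zero_le _
  | succ r ih =>
    intro t hg
    have htbot : t ≠ ⊥ := bot_mem_ne hg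
    have hmin : ¬ IsMin t := fun h => htbot (le_antisymm (h bot_le) bot_le)
    obtain ⟨c, hct⟩ := exists_covBy_of_wellFoundedGT hmin
    have hgc := interval_graded_of_cover hct hg
    have hrc := ih c hgc
    set A := univ.filter (fun a : α => IsAtom a ∧ a ≤ t) with hA
    have hjle : A.sup id ≤ t := Finset.sup_le (fun b hb => (Finset.mem_filter.mp hb).2.2)
    have hjt : A.sup id = t := by
      by_contra hne
      have hw := weisner_dual (pmu α) (pmu_sum_left) (pmu_sum_right) t (A.sup id) hjle hne
      have hset : (univ.filter fun z : α => z ≤ t ∧ z ⊓ A.sup id = ⊥) = {⊥} := by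
        ext z
        simp only [Finset.mem_filter, Finset.mem_univ, true_and, Finset.mem_singleton]
        constructor
        · rintro ⟨hzt, hzj⟩
          by_contra hz
          obtain ⟨b, hb, hbz⟩ :=
            (IsAtomic.eq_bot_or_exists_atom_le z).resolve_left hz
          have hbA : b ∈ A := Finset.mem_filter.mpr ⟨Finset.mem_univ _, hb, hbz.trans hzt⟩
          have hble : b ≤ z ⊓ A.sup id := le_inf hbz (Finset.le_sup (f := id) hbA)
          rw [hzj] at hble
          exact hb.1 (le_bot_iff.mp hble)
        · rintro rfl; exact ⟨bot_le, by simp⟩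
      rw [hset, Finset.sum_singleton] at hw
      exact hmu ⊥ t bot_le hw
    have hex : ∃ a ∈ A, ¬ a ≤ c := by
      by_contra h
      push_neg at h
      have hlec : A.sup id ≤ c := Finset.sup_le (fun b hb => h b hb)
      rw [hjt] at hlec
      exact hct.lt.not_ge hlec
    obtain ⟨a0, ha0A, ha0c⟩ := hex
    have hss : (univ.filter fun a : α => IsAtom a ∧ a ≤ c) ⊂ A := by
      constructor
      · intro b hb
        obtain ⟨_, hb1, hb2⟩ := Finset.mem_filter.mp hb
        exact Finset.mem_filter.mpr ⟨Finset.mem_univ _, hb1, hb2.trans hct.lt.le⟩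
      · intro h
        exact ha0c (Finset.mem_filter.mp (h ha0A)).2.2
    have := Finset.card_lt_card hss
    omega

end Aux

open scoped Classical in
/-- Every Eulerian lattice of rank `d` has at least `d` atoms; more
generally, every finite graded lattice of rank `d` with nowhere vanishing Möbius function
has at least `d` atoms. -/
theorem stmt15 :
    (∀ (α : Type) (_ : Lattice α) (_ : Fintype α) (_ : BoundedOrder α) (d : ℕ)
      (ρ : α → α → ℕ), LowerEulerianWith α ρ → GradedRank (Set.univ : Set α) d →
        d ≤ (Finset.univ.filter fun x : α => IsAtom x).card) ∧
    (∀ (α : Type) (_ : Lattice α) (_ : Fintype α) (_ : BoundedOrder α) (d : ℕ),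
      GradedRank (Set.univ : Set α) d → (∀ x y : α, x ≤ y → pmu α x y ≠ 0) →
        d ≤ (Finset.univ.filter fun x : α => IsAtom x).card) := by
  have part2 : (∀ (α : Type) (_ : Lattice α) (_ : Fintype α) (_ : BoundedOrder α) (d : ℕ),
      GradedRank (Set.univ : Set α) d → (∀ x y : α, x ≤ y → pmu α x y ≠ 0) →
        d ≤ (Finset.univ.filter fun x : α => IsAtom x).card) := by
    intro α L F B d hg hmu
    have h1 : IntervalGraded (⊥ : α) ⊤ d := by
      intro c hc
      obtain ⟨hc1, hc2, hc3⟩ := hc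
      exact hg c ⟨Set.subset_univ _, hc2, fun c' _ hch hsub =>
        hc3 c' (fun z _ => ⟨bot_le, le_top⟩) hch hsub⟩
    have h2 := atoms_count hmu d ⊤ h1
    have h3 : (Finset.univ.filter fun a : α => IsAtom a ∧ a ≤ ⊤)
        = (Finset.univ.filter fun x : α => IsAtom x) := by
      apply Finset.filter_congr
      intro x _
      simp [le_top]
    rw [h3] at h2
    exact h2
  refine ⟨fun α L F B d ρ hE hg => ?_, part2⟩
  exact part2 α L F B d hg (fun x y hxy => by
    rw [(hE x y hxy).2]
    exact pow_ne_zero _ (by norm_num))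
end
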